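/- arXiv:2204.01185 — 3 statements merged into one kernel-verified Lean document; each statement's English description precedes it below -/
import Mathlib

section
/- (Equivalence of the velocity and momentum formulations.) Let G = (V,E) be a finite, connected, undirected graph with no self-loops, V = {1,…,N}, N ≥ 2, all edge weights equal to 1, let ρ^a, ρ^b ∈ P(G), Σ ∈ ℝ^N, and let w : [0,1] → ℝ be continuous piecewise linear. Then the infimum of (1/2)∫₀¹ ⟨v(t), v(t)⟩_{θ(ρ(t))} dt over all pairs (ρ, v) with ρ : [0,1] → P(G) absolutely continuous, v : [0,1] → ℝ^{N×N} measurable with each v(t) skew-symmetric and supported on E and ∫₀¹⟨v,v⟩_{θ(ρ)}dt < ∞, satisfying ρ(0) = ρ^a, ρ(1) = ρ^b and, for a.e. t and every i, ρ̇_i(t) − ∑_{j∈N(i)} v_ij(t) θ_ij(ρ(t)) + ∑_{j∈N(i)} (Σ_j − Σ_i) θ_ij(ρ(t)) ẇ(t) = 0, is equal to the infimum of A(ρ, m) over (ρ, m) ∈ C_F(ρ^a, ρ^b). -/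
open scoped BigOperators ENNReal
open MeasureTheory

noncomputable section

/-- Density-dependent edge weight `θ_ij(ρ) = (ρ_i + ρ_j)/2`. -/
def thetaA {N : ℕ} (ρ : Fin N → ℝ) (i j : Fin N) : ℝ := (ρ i + ρ j) / 2

/-- The cost function `L : ℝ × ℝ → [0,∞]`, `L(x,y) = y²/x` for `x > 0`,
`L(0,0) = 0`, and `L(x,y) = ∞` otherwise. -/
def Lcost (x y : ℝ) : ℝ≥0∞ :=
  if 0 < x then ENNReal.ofReal (y ^ 2 / x)
  else if x = 0 ∧ y = 0 then 0 else ⊤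

/-- Membership in the probability simplex `P(G)`. -/
def ProbVec {N : ℕ} (ρ : Fin N → ℝ) : Prop := (∀ i, 0 ≤ ρ i) ∧ ∑ i, ρ i = 1

/-- A vector field on the graph: a skew-symmetric matrix supported on edges. -/
def VecField {N : ℕ} (E : Fin N → Fin N → Prop) (m : Fin N → Fin N → ℝ) : Prop :=
  (∀ i j, m i j = - m j i) ∧ (∀ i j, ¬ E i j → m i j = 0)

/-- `w` is continuous and piecewise linear on `[0,1]` with a.e. derivative `wd`:
there is a partition `0 = t₀ < t₁ < ⋯ = 1` on whose pieces `w` is affine with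
slope `c k`, and `wd` equals `c k` on `[t_k, t_{k+1})`. -/
def IsPWL (w wd : ℝ → ℝ) : Prop :=
  ∃ (K : ℕ) (t : Fin (K + 2) → ℝ) (c : Fin (K + 1) → ℝ),
    StrictMono t ∧ t 0 = 0 ∧ t (Fin.last (K + 1)) = 1 ∧
    (∀ k : Fin (K + 1), ∀ s ∈ Set.Icc (t k.castSucc) (t k.succ),
      w s = w (t k.castSucc) + c k * (s - t k.castSucc)) ∧
    (∀ k : Fin (K + 1), ∀ s ∈ Set.Ico (t k.castSucc) (t k.succ), wd s = c k)

/-- The action `A(ρ,m) = ∫₀¹ (1/4) ∑_{(i,j)∈E} L(θ_ij(ρ(t)), m_ij(t)) dt`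
(sum over ordered pairs), valued in `[0,∞]`. -/
def action {N : ℕ} (E : Fin N → Fin N → Prop) [DecidableRel E]
    (ρ : ℝ → Fin N → ℝ) (m : ℝ → Fin N → Fin N → ℝ) : ℝ≥0∞ :=
  ∫⁻ t in Set.Icc (0 : ℝ) 1,
    (1 / 4) * ∑ i, ∑ j, (if E i j then Lcost (thetaA (ρ t) i j) (m t i j) else 0)

/-- The feasible set `C_F(ρ^a,ρ^b)` of the Wong–Zakai perturbed optimal control
problem: `ρ` is an absolutely continuous curve in `P(G)` joining `ρ^a` to `ρ^b`,
`m` is an `L²` field of skew-symmetric matrices supported on edges, and for a.e. `t`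
and all `i`: `ρ̇_i + ∑_{j∈N(i)} m_ij + ∑_{j∈N(i)} (Σ_j − Σ_i) θ_ij(ρ) ẇ = 0`
(stated in integrated form). -/
def Feasible {N : ℕ} (E : Fin N → Fin N → Prop) [DecidableRel E]
    (Sg : Fin N → ℝ) (wd : ℝ → ℝ) (ρa ρb : Fin N → ℝ)
    (ρ : ℝ → Fin N → ℝ) (m : ℝ → Fin N → Fin N → ℝ) : Prop :=
  ContinuousOn ρ (Set.Icc 0 1) ∧
  (∀ t ∈ Set.Icc (0 : ℝ) 1, ProbVec (ρ t)) ∧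
  ρ 0 = ρa ∧ ρ 1 = ρb ∧
  (∀ t, VecField E (m t)) ∧
  (∀ i j, MemLp (fun t => m t i j) 2 (volume.restrict (Set.Icc (0 : ℝ) 1))) ∧
  (∀ i, IntervalIntegrable
    (fun s => ∑ j, (if E i j then m s i j + (Sg j - Sg i) * thetaA (ρ s) i j * wd s else 0))
    volume 0 1) ∧
  (∀ i, ∀ t ∈ Set.Icc (0 : ℝ) 1,
    ρ t i = ρa i - ∫ s in (0 : ℝ)..t,
      ∑ j, (if E i j then m s i j + (Sg j - Sg i) * thetaA (ρ s) i j * wd s else 0))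

/-- The kinetic energy functional `(1/2)∫₀¹ ⟨v(t),v(t)⟩_{θ(ρ(t))} dt` of a
velocity field, valued in `[0,∞]`. -/
def energyV {N : ℕ} (E : Fin N → Fin N → Prop) [DecidableRel E]
    (ρ : ℝ → Fin N → ℝ) (v : ℝ → Fin N → Fin N → ℝ) : ℝ≥0∞ :=
  ∫⁻ t in Set.Icc (0 : ℝ) 1,
    ENNReal.ofReal ((1 / 2) *
      ((1 / 2) * ∑ i, ∑ j, (if E i j then (v t i j) ^ 2 * thetaA (ρ t) i j else 0)))

/-- The feasible set of the velocity formulation: `ρ` is an absolutely continuous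
curve in `P(G)` joining `ρ^a` to `ρ^b`, `v` a measurable field of skew-symmetric
matrices supported on edges with finite kinetic energy, and for a.e. `t` and all `i`:
`ρ̇_i − ∑_{j∈N(i)} v_ij θ_ij(ρ) + ∑_{j∈N(i)} (Σ_j − Σ_i) θ_ij(ρ) ẇ = 0`
(stated in integrated form). -/
def VFeasible {N : ℕ} (E : Fin N → Fin N → Prop) [DecidableRel E]
    (Sg : Fin N → ℝ) (wd : ℝ → ℝ) (ρa ρb : Fin N → ℝ)
    (ρ : ℝ → Fin N → ℝ) (v : ℝ → Fin N → Fin N → ℝ) : Prop :=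
  ContinuousOn ρ (Set.Icc 0 1) ∧
  (∀ t ∈ Set.Icc (0 : ℝ) 1, ProbVec (ρ t)) ∧
  ρ 0 = ρa ∧ ρ 1 = ρb ∧
  (∀ t, VecField E (v t)) ∧
  (∀ i j, AEStronglyMeasurable (fun t => v t i j) (volume.restrict (Set.Icc (0 : ℝ) 1))) ∧
  energyV E ρ v < ⊤ ∧
  (∀ i, IntervalIntegrable
    (fun s => ∑ j, (if E i j then (v s i j - (Sg j - Sg i) * wd s) * thetaA (ρ s) i j else 0))
    volume 0 1) ∧
  (∀ i, ∀ t ∈ Set.Icc (0 : ℝ) 1,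
    ρ t i = ρa i + ∫ s in (0 : ℝ)..t,
      ∑ j, (if E i j then (v s i j - (Sg j - Sg i) * wd s) * thetaA (ρ s) i j else 0))

-- auxiliary lemmas
lemma thetaA_symm {N : ℕ} (ρ : Fin N → ℝ) (i j : Fin N) : thetaA ρ i j = thetaA ρ j i := by
  simp [thetaA, add_comm]

lemma Lcost_neg_mul (θ v : ℝ) (hθ : 0 ≤ θ) :
    Lcost θ (-(v * θ)) = ENNReal.ofReal (v ^ 2 * θ) := by
  rcases hθ.lt_or_eq with h | h
  · rw [Lcost, if_pos h]
    congr 1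
    field_simp
  · rw [Lcost, if_neg (by simp [← h]), if_pos (by simp [← h])]
    simp [← h]

lemma ofReal_div_sq_le_Lcost (θ m : ℝ) (hθ : 0 ≤ θ) :
    ENNReal.ofReal ((-m / θ) ^ 2 * θ) ≤ Lcost θ m := by
  rcases hθ.lt_or_eq with h | h
  · rw [Lcost, if_pos h]
    apply le_of_eq
    congr 1
    field_simp
  · simp [← h]

lemma Lcost_lt_top (θ m : ℝ) (hθ : 0 ≤ θ) (h : Lcost θ m < ⊤) : 0 < θ ∨ m = 0 := by
  rcases hθ.lt_or_eq with h' | h'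
  · exact Or.inl h'
  · right
    by_contra hm
    rw [Lcost, if_neg (by simp [← h']), if_neg (by simp [← h', hm])] at h
    exact absurd h (lt_irrefl _)

lemma measurable_Lcost : Measurable fun p : ℝ × ℝ => Lcost p.1 p.2 := by
  unfold Lcost
  apply Measurable.ite
  · exact measurableSet_lt measurable_const measurable_fst
  · exact ((measurable_snd.pow_const 2).div measurable_fst).ennreal_ofReal
  · apply Measurable.ite _ measurable_const measurable_const
    exact (measurable_fst (measurableSet_singleton 0)).inter
      (measurable_snd (measurableSet_singleton 0))

lemma ofReal_energy_sum {N : ℕ} (E : Fin N → Fin N → Prop) [DecidableRel E]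
    (f : Fin N → Fin N → ℝ) (hf : ∀ i j, E i j → 0 ≤ f i j) :
    ENNReal.ofReal ((1 / 2) * ((1 / 2) * ∑ i, ∑ j, if E i j then f i j else 0))
      = (1 / 4 : ℝ≥0∞) * ∑ i, ∑ j, (if E i j then ENNReal.ofReal (f i j) else 0) := by
  have hnn : ∀ i j : Fin N, 0 ≤ if E i j then f i j else 0 := by
    intro i j; split <;> [exact hf _ _ ‹_›; exact le_refl 0]
  have h1 : ((1:ℝ) / 2) * ((1 / 2) * ∑ i, ∑ j, if E i j then f i j else 0)
      = (1 / 4) * ∑ i, ∑ j, if E i j then f i j else 0 := by ring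
  rw [h1, ENNReal.ofReal_mul (by norm_num)]
  congr 1
  · rw [show ((1:ℝ)/4) = ((4:ℝ))⁻¹ by norm_num, ENNReal.ofReal_inv_of_pos (by norm_num)]
    norm_num
  · rw [ENNReal.ofReal_sum_of_nonneg (fun i _ => Finset.sum_nonneg (fun j _ => hnn i j))]
    refine Finset.sum_congr rfl fun i _ => ?_
    rw [ENNReal.ofReal_sum_of_nonneg (fun j _ => hnn i j)]
    refine Finset.sum_congr rfl fun j _ => ?_
    split <;> simp

lemma thetaA_nonneg {N : ℕ} {ρ : Fin N → ℝ} (h : ProbVec ρ) (i j : Fin N) :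
    0 ≤ thetaA ρ i j := by
  have := h.1 i; have := h.1 j; simp only [thetaA]; linarith

lemma thetaA_le_one {N : ℕ} {ρ : Fin N → ℝ} (h : ProbVec ρ) (i j : Fin N) :
    thetaA ρ i j ≤ 1 := by
  have hi : ρ i ≤ 1 := by
    rw [← h.2]
    exact Finset.single_le_sum (fun k _ => h.1 k) (Finset.mem_univ i)
  have hj : ρ j ≤ 1 := by
    rw [← h.2]
    exact Finset.single_le_sum (fun k _ => h.1 k) (Finset.mem_univ j)
  simp only [thetaA]; linarith

lemma theta_contOn {N : ℕ} {ρ : ℝ → Fin N → ℝ} (hc : ContinuousOn ρ (Set.Icc 0 1))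
    (i j : Fin N) : ContinuousOn (fun t => thetaA (ρ t) i j) (Set.Icc (0:ℝ) 1) := by
  have hi : ContinuousOn (fun t => ρ t i) (Set.Icc (0:ℝ) 1) :=
    (continuous_apply i).comp_continuousOn hc
  have hj : ContinuousOn (fun t => ρ t j) (Set.Icc (0:ℝ) 1) :=
    (continuous_apply j).comp_continuousOn hc
  exact (hi.add hj).div_const 2

lemma dir2 {N : ℕ} (E : Fin N → Fin N → Prop) [DecidableRel E]
    (Sg : Fin N → ℝ) (wd : ℝ → ℝ) (ρa ρb : Fin N → ℝ)
    (ρ : ℝ → Fin N → ℝ) (v : ℝ → Fin N → Fin N → ℝ)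
    (hp : VFeasible E Sg wd ρa ρb ρ v) :
    Feasible E Sg wd ρa ρb ρ (fun t i j => -(v t i j * thetaA (ρ t) i j)) ∧
    action E ρ (fun t i j => -(v t i j * thetaA (ρ t) i j)) = energyV E ρ v := by
  obtain ⟨hc, hprob, h0, h1, hvf, hmeas, hEfin, hII, hρeq⟩ := hp
  set m : ℝ → Fin N → Fin N → ℝ := fun t i j => -(v t i j * thetaA (ρ t) i j) with hm
  -- pointwise equality of the constraint integrands
  have hint_eq : ∀ (i : Fin N),
      (fun s => ∑ j, (if E i j then m s i j + (Sg j - Sg i) * thetaA (ρ s) i j * wd s else 0))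
        = fun s => -(∑ j, (if E i j then
            (v s i j - (Sg j - Sg i) * wd s) * thetaA (ρ s) i j else 0)) := by
    intro i
    funext s
    rw [← Finset.sum_neg_distrib]
    refine Finset.sum_congr rfl fun j _ => ?_
    split
    · simp only [hm]; ring
    · simp
  constructor
  · refine ⟨hc, hprob, h0, h1, ?_, ?_, ?_, ?_⟩
    · -- VecField
      intro t
      refine ⟨fun i j => ?_, fun i j hij => ?_⟩
      · simp only [hm]
        rw [(hvf t).1 i j, thetaA_symm]
        ring
      · simp only [hm, (hvf t).2 i j hij, zero_mul, neg_zero]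
    · -- Memℒp
      intro i j
      have hθc := theta_contOn hc i j
      have hθm : AEStronglyMeasurable (fun t => thetaA (ρ t) i j)
          (volume.restrict (Set.Icc (0:ℝ) 1)) :=
        (hθc.aemeasurable measurableSet_Icc).aestronglyMeasurable
      have hmsm : AEStronglyMeasurable (fun t => m t i j)
          (volume.restrict (Set.Icc (0:ℝ) 1)) := ((hmeas i j).mul hθm).neg
      by_cases hEij : E i j
      · rw [memLp_two_iff_integrable_sq hmsm]
        refine ⟨hmsm.pow 2, ?_⟩
        rw [hasFiniteIntegral_iff_ofReal (ae_of_all _ fun t => sq_nonneg _)]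
        have hbound : ∫⁻ t in Set.Icc (0:ℝ) 1, ENNReal.ofReal ((m t i j) ^ 2)
            ≤ ∫⁻ t in Set.Icc (0:ℝ) 1, 4 * ENNReal.ofReal ((1 / 2) *
              ((1 / 2) * ∑ i', ∑ j', (if E i' j' then (v t i' j') ^ 2 * thetaA (ρ t) i' j' else 0))) := by
          refine lintegral_mono_ae ((ae_restrict_iff' measurableSet_Icc).2 (ae_of_all _ fun t ht => ?_))
          have hpv := hprob t ht
          have hθ0 := thetaA_nonneg hpv i j
          have hθ1 := thetaA_le_one hpv i j
          rw [ofReal_energy_sum E _ (fun i' j' _ => mul_nonneg (sq_nonneg _) (thetaA_nonneg hpv i' j'))]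
          rw [← mul_assoc, show (4 : ℝ≥0∞) * (1/4) = 1 by rw [one_div]; exact ENNReal.mul_inv_cancel (by norm_num) (by norm_num), one_mul]
          calc ENNReal.ofReal ((m t i j) ^ 2)
              ≤ ENNReal.ofReal ((v t i j) ^ 2 * thetaA (ρ t) i j) := by
                apply ENNReal.ofReal_le_ofReal
                have : (m t i j) ^ 2 = (v t i j) ^ 2 * thetaA (ρ t) i j * thetaA (ρ t) i j := by
                  simp only [hm]; ring
                rw [this]
                exact mul_le_of_le_one_right (mul_nonneg (sq_nonneg _) hθ0) hθ1
            _ ≤ ∑ i', ∑ j', (if E i' j' then ENNReal.ofReal ((v t i' j') ^ 2 * thetaA (ρ t) i' j') else 0) := by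
                calc ENNReal.ofReal ((v t i j) ^ 2 * thetaA (ρ t) i j)
                    = (if E i j then ENNReal.ofReal ((v t i j) ^ 2 * thetaA (ρ t) i j) else 0) := by
                      rw [if_pos hEij]
                  _ ≤ ∑ j', (if E i j' then ENNReal.ofReal ((v t i j') ^ 2 * thetaA (ρ t) i j') else 0) :=
                      Finset.single_le_sum
                        (f := fun j' => if E i j' then ENNReal.ofReal ((v t i j') ^ 2 * thetaA (ρ t) i j') else 0)
                        (fun _ _ => zero_le) (Finset.mem_univ j)
                  _ ≤ _ := Finset.single_le_sum
                      (f := fun i' => ∑ j', (if E i' j' then ENNReal.ofReal ((v t i' j') ^ 2 * thetaA (ρ t) i' j') else 0))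
                      (fun _ _ => zero_le) (Finset.mem_univ i)
        calc ∫⁻ t in Set.Icc (0:ℝ) 1, ENNReal.ofReal ((m t i j) ^ 2)
            ≤ _ := hbound
          _ = 4 * energyV E ρ v := by rw [energyV, lintegral_const_mul' _ _ (by norm_num)]
          _ < ⊤ := ENNReal.mul_lt_top (by norm_num) hEfin
      · have : (fun t => m t i j) = fun _ => (0:ℝ) := by
          funext t; simp [hm, (hvf t).2 i j hEij]
        rw [this]
        exact memLp_const 0
    · -- IntervalIntegrable
      intro i
      rw [hint_eq i]
      exact (hII i).neg
    · -- integral formula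
      intro i t ht
      rw [hint_eq i, intervalIntegral.integral_neg, sub_neg_eq_add]
      exact hρeq i t ht
  · -- action = energy
    rw [action, energyV]
    refine setLIntegral_congr_fun measurableSet_Icc (fun t ht => ?_)
    have hpv := hprob t ht
    rw [ofReal_energy_sum E _ (fun i' j' _ => mul_nonneg (sq_nonneg _) (thetaA_nonneg hpv i' j'))]
    congr 1
    refine Finset.sum_congr rfl fun i _ => Finset.sum_congr rfl fun j _ => ?_
    split
    · exact Lcost_neg_mul _ _ (thetaA_nonneg hpv i j)
    · rfl

lemma dir1 {N : ℕ} (E : Fin N → Fin N → Prop) [DecidableRel E]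
    (Sg : Fin N → ℝ) (wd : ℝ → ℝ) (ρa ρb : Fin N → ℝ)
    (ρ : ℝ → Fin N → ℝ) (m : ℝ → Fin N → Fin N → ℝ)
    (hq : Feasible E Sg wd ρa ρb ρ m) (htop : action E ρ m ≠ ⊤) :
    VFeasible E Sg wd ρa ρb ρ (fun s i j => -(m s i j) / thetaA (ρ s) i j) ∧
    energyV E ρ (fun s i j => -(m s i j) / thetaA (ρ s) i j) ≤ action E ρ m := by
  obtain ⟨hc, hprob, h0, h1, hvf, hL2, hII, hρeq⟩ := hq
  set v : ℝ → Fin N → Fin N → ℝ := fun s i j => -(m s i j) / thetaA (ρ s) i j with hv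
  have hθm : ∀ i j : Fin N, AEMeasurable (fun t => thetaA (ρ t) i j)
      (volume.restrict (Set.Icc (0:ℝ) 1)) := fun i j =>
    (theta_contOn hc i j).aemeasurable measurableSet_Icc
  have hmm : ∀ i j : Fin N, AEMeasurable (fun t => m t i j)
      (volume.restrict (Set.Icc (0:ℝ) 1)) := fun i j => (hL2 i j).1.aemeasurable
  -- measurability of the action integrand
  have hFmeas : AEMeasurable (fun t => (1 / 4 : ℝ≥0∞) *
      ∑ i, ∑ j, (if E i j then Lcost (thetaA (ρ t) i j) (m t i j) else 0))
      (volume.restrict (Set.Icc (0:ℝ) 1)) := by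
    refine AEMeasurable.const_mul ?_ _
    refine Finset.aemeasurable_fun_sum _ fun i _ => Finset.aemeasurable_fun_sum _ fun j _ => ?_
    by_cases hEij : E i j
    · simp only [if_pos hEij]
      exact measurable_Lcost.comp_aemeasurable ((hθm i j).prodMk (hmm i j))
    · simp only [if_neg hEij]
      exact aemeasurable_const
  -- a.e. goodness
  have hgood : ∀ᵐ t ∂(volume.restrict (Set.Icc (0:ℝ) 1)),
      ∀ i j : Fin N, E i j → (0 < thetaA (ρ t) i j ∨ m t i j = 0) := by
    have hae := ae_lt_top' hFmeas (by rw [action] at htop; exact htop)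
    filter_upwards [hae, ae_restrict_mem measurableSet_Icc] with t hft htI i j hEij
    have hSne : (∑ i, ∑ j, (if E i j then Lcost (thetaA (ρ t) i j) (m t i j) else 0)) ≠ ⊤ := by
      intro hS
      rw [hS, ENNReal.mul_top (by norm_num)] at hft
      exact absurd hft (lt_irrefl _)
    have hterm : Lcost (thetaA (ρ t) i j) (m t i j) < ⊤ := by
      have h1 : (if E i j then Lcost (thetaA (ρ t) i j) (m t i j) else 0)
          ≤ ∑ j', (if E i j' then Lcost (thetaA (ρ t) i j') (m t i j') else 0) :=
        Finset.single_le_sum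
          (f := fun j' => if E i j' then Lcost (thetaA (ρ t) i j') (m t i j') else 0)
          (fun _ _ => zero_le) (Finset.mem_univ j)
      have h2 : (∑ j', (if E i j' then Lcost (thetaA (ρ t) i j') (m t i j') else 0))
          ≤ ∑ i', ∑ j', (if E i' j' then Lcost (thetaA (ρ t) i' j') (m t i' j') else 0) :=
        Finset.single_le_sum
          (f := fun i' => ∑ j', (if E i' j' then Lcost (thetaA (ρ t) i' j') (m t i' j') else 0))
          (fun _ _ => zero_le) (Finset.mem_univ i)
      rw [if_pos hEij] at h1
      exact lt_of_le_of_lt (h1.trans h2) (lt_top_iff_ne_top.2 hSne)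
    exact Lcost_lt_top _ _ (thetaA_nonneg (hprob t htI) i j) hterm
  -- a.e. equality of the constraint integrands
  have heq : ∀ᵐ t ∂(volume.restrict (Set.Icc (0:ℝ) 1)), ∀ i : Fin N,
      (∑ j, (if E i j then (v t i j - (Sg j - Sg i) * wd t) * thetaA (ρ t) i j else 0))
        = -(∑ j, (if E i j then m t i j + (Sg j - Sg i) * thetaA (ρ t) i j * wd t else 0)) := by
    filter_upwards [hgood, ae_restrict_mem measurableSet_Icc] with t hg htI i
    rw [← Finset.sum_neg_distrib]
    refine Finset.sum_congr rfl fun j _ => ?_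
    by_cases hEij : E i j
    · rw [if_pos hEij, if_pos hEij]
      rcases hg i j hEij with hθ | hm0
      · simp only [hv]
        field_simp
        ring
      · simp only [hv, hm0, neg_zero, zero_div, zero_sub]
        ring
    · simp [hEij]
  have heq' : ∀ᵐ t ∂(volume : Measure ℝ), t ∈ Set.Icc (0:ℝ) 1 → ∀ i : Fin N,
      (∑ j, (if E i j then (v t i j - (Sg j - Sg i) * wd t) * thetaA (ρ t) i j else 0))
        = -(∑ j, (if E i j then m t i j + (Sg j - Sg i) * thetaA (ρ t) i j * wd t else 0)) :=
    (ae_restrict_iff' measurableSet_Icc).1 heq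
  -- energy bound
  have hEbound : energyV E ρ v ≤ action E ρ m := by
    rw [energyV, action]
    refine lintegral_mono_ae ((ae_restrict_iff' measurableSet_Icc).2 (ae_of_all _ fun t ht => ?_))
    have hpv := hprob t ht
    rw [ofReal_energy_sum E _ (fun i' j' _ => mul_nonneg (sq_nonneg _) (thetaA_nonneg hpv i' j'))]
    refine mul_le_mul_right ?_ _
    refine Finset.sum_le_sum fun i _ => Finset.sum_le_sum fun j _ => ?_
    split
    · exact ofReal_div_sq_le_Lcost _ _ (thetaA_nonneg hpv i j)
    · exact le_refl _
  refine ⟨⟨hc, hprob, h0, h1, ?_, ?_, lt_of_le_of_lt hEbound (lt_top_iff_ne_top.2 htop), ?_, ?_⟩, hEbound⟩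
  · -- VecField
    intro t
    refine ⟨fun i j => ?_, fun i j hij => ?_⟩
    · simp only [hv]
      rw [(hvf t).1 i j, thetaA_symm]
      ring
    · simp [hv, (hvf t).2 i j hij]
  · -- measurability of v
    intro i j
    exact ((hmm i j).neg.div (hθm i j)).aestronglyMeasurable
  · -- interval integrability
    intro i
    have hIocsub : Set.Ioc (0:ℝ) 1 ⊆ Set.Icc 0 1 := Set.Ioc_subset_Icc_self
    constructor
    · refine (Integrable.neg (hII i).1).congr ?_
      refine (ae_restrict_of_ae_restrict_of_subset hIocsub ?_)
      filter_upwards [heq] with t h using (h i).symm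
    · rw [Set.Ioc_eq_empty (by norm_num)]
      exact integrableOn_empty
  · -- integral formula
    intro i t ht
    have hIeq : (∫ s in (0:ℝ)..t,
        ∑ j, (if E i j then (v s i j - (Sg j - Sg i) * wd s) * thetaA (ρ s) i j else 0))
        = ∫ s in (0:ℝ)..t,
        -(∑ j, (if E i j then m s i j + (Sg j - Sg i) * thetaA (ρ s) i j * wd s else 0)) := by
      refine intervalIntegral.integral_congr_ae ?_
      filter_upwards [heq'] with s hs hsI
      have hsub : Set.uIoc (0:ℝ) t ⊆ Set.Icc 0 1 := by
        rw [Set.uIoc_of_le ht.1]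
        exact (Set.Ioc_subset_Icc_self).trans (Set.Icc_subset_Icc le_rfl ht.2)
      exact hs (hsub hsI) i
    rw [hIeq, intervalIntegral.integral_neg, ← sub_eq_add_neg]
    exact hρeq i t ht

/-- Equivalence of the velocity and momentum formulations of the Wong–Zakai
perturbed optimal control problem: the two infima coincide. -/
theorem velocity_momentum_equivalence
    (N : ℕ) (hN : 2 ≤ N) (E : Fin N → Fin N → Prop) [DecidableRel E]
    (hEsymm : ∀ i j, E i j ↔ E j i) (hEirr : ∀ i, ¬ E i i)
    (hconn : ∀ i j : Fin N, Relation.ReflTransGen (fun a b => E a b) i j)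
    (Sg : Fin N → ℝ) (w wd : ℝ → ℝ) (hw : IsPWL w wd)
    (ρa ρb : Fin N → ℝ) (hρa : ProbVec ρa) (hρb : ProbVec ρb) :
    (⨅ p : {p : (ℝ → Fin N → ℝ) × (ℝ → Fin N → Fin N → ℝ) //
        VFeasible E Sg wd ρa ρb p.1 p.2}, energyV E p.1.1 p.1.2)
      = ⨅ q : {q : (ℝ → Fin N → ℝ) × (ℝ → Fin N → Fin N → ℝ) //
        Feasible E Sg wd ρa ρb q.1 q.2}, action E q.1.1 q.1.2 := by
  refine le_antisymm (le_iInf fun q => ?_) (le_iInf fun p => ?_)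
  · obtain ⟨⟨ρ, m⟩, hq⟩ := q
    by_cases htop : action E ρ m = ⊤
    · exact htop ▸ le_top
    · obtain ⟨hfeas, hle⟩ := dir1 E Sg wd ρa ρb ρ m hq htop
      exact le_trans
        (iInf_le _ (⟨⟨ρ, fun s i j => -(m s i j) / thetaA (ρ s) i j⟩, hfeas⟩ :
          {p : (ℝ → Fin N → ℝ) × (ℝ → Fin N → Fin N → ℝ) //
            VFeasible E Sg wd ρa ρb p.1 p.2})) hle
  · obtain ⟨⟨ρ, v⟩, hp⟩ := p
    obtain ⟨hfeas, heqA⟩ := dir2 E Sg wd ρa ρb ρ v hp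
    exact le_of_le_of_eq
      (iInf_le _ (⟨⟨ρ, fun t i j => -(v t i j * thetaA (ρ t) i j)⟩, hfeas⟩ :
        {q : (ℝ → Fin N → ℝ) × (ℝ → Fin N → Fin N → ℝ) //
          Feasible E Sg wd ρa ρb q.1 q.2})) heqA

end
end

section
/- (Pathwise version of Proposition: nonemptiness of the feasible set for the specially perturbed optimal control problem.) Let G = (V,E) be a finite, connected, undirected graph with no self-loops, V = {1,…,N}, N ≥ 2, all edge weights equal to 1, and let w : [0,1] → ℝ be continuous piecewise linear with every slope different from −1. Then for any ρ^a, ρ^b ∈ P(G), the feasible set S_F(ρ^a, ρ^b) — pairs (ρ, m) with ρ : [0,1] → P(G) absolutely continuous, m ∈ L²([0,1]; ℝ^{N×N}) with each m(t) skew-symmetric and supported on E, ρ(0) = ρ^a, ρ(1) = ρ^b, and for a.e. t and every i: ρ̇_i(t) + (1 + ẇ(t)) ∑_{j∈N(i)} m_ij(t) = 0 — is nonempty and contains a pair with finite action A(ρ, m) < ∞. -/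
open scoped BigOperators ENNReal
open MeasureTheory

noncomputable section

/-- The feasible set `S_F(ρ^a,ρ^b)` of the specially perturbed optimal control
problem: `ρ` is an absolutely continuous curve in `P(G)` joining `ρ^a` to `ρ^b`,
`m` is an `L²` field of skew-symmetric matrices supported on edges, and for a.e. `t`
and all `i`: `ρ̇_i + (1 + ẇ(t)) ∑_{j∈N(i)} m_ij = 0` (stated in integrated form). -/
def SFeasible {N : ℕ} (E : Fin N → Fin N → Prop) [DecidableRel E]
    (wd : ℝ → ℝ) (ρa ρb : Fin N → ℝ)
    (ρ : ℝ → Fin N → ℝ) (m : ℝ → Fin N → Fin N → ℝ) : Prop :=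
  ContinuousOn ρ (Set.Icc 0 1) ∧
  (∀ t ∈ Set.Icc (0 : ℝ) 1, ProbVec (ρ t)) ∧
  ρ 0 = ρa ∧ ρ 1 = ρb ∧
  (∀ t, VecField E (m t)) ∧
  (∀ i j, MemLp (fun t => m t i j) 2 (volume.restrict (Set.Icc (0 : ℝ) 1))) ∧
  (∀ i, IntervalIntegrable
    (fun s => (1 + wd s) * ∑ j, (if E i j then m s i j else 0)) volume 0 1) ∧
  (∀ i, ∀ t ∈ Set.Icc (0 : ℝ) 1,
    ρ t i = ρa i - ∫ s in (0 : ℝ)..t,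
      (1 + wd s) * ∑ j, (if E i j then m s i j else 0))

-- auxiliary lemmas

def dlt {N : ℕ} (i j : Fin N) : Fin N → ℝ :=
  fun k => (if k = i then (1:ℝ) else 0) - (if k = j then 1 else 0)

lemma flow_pair {N : ℕ} (E : Fin N → Fin N → Prop)
    (hEsymm : ∀ i j, E i j ↔ E j i) (hEirr : ∀ i, ¬ E i i)
    (i j : Fin N) (h : Relation.ReflTransGen (fun a b => E a b) i j) :
    ∃ M : Fin N → Fin N → ℝ, (∀ a b, M a b = - M b a) ∧
      (∀ a b, ¬ E a b → M a b = 0) ∧ (∀ a, ∑ b, M a b = dlt i j a) := by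
  induction h with
  | refl =>
      refine ⟨0, by simp, by simp, fun a => by simp [dlt]⟩
  | @tail b c hib hbc ih =>
      obtain ⟨M, hsk, hsp, hdiv⟩ := ih
      have hbc' : b ≠ c := by rintro rfl; exact hEirr b hbc
      refine ⟨fun a b' => M a b' + ((if a = b ∧ b' = c then (1:ℝ) else 0)
        - (if a = c ∧ b' = b then 1 else 0)), ?_, ?_, ?_⟩
      · intro a b'
        dsimp only
        rw [hsk a b']
        have e1 : (if a = b ∧ b' = c then (1:ℝ) else 0)
            = (if b' = c ∧ a = b then 1 else 0) :=
          if_congr (Iff.intro (fun h => ⟨h.2, h.1⟩) (fun h => ⟨h.2, h.1⟩)) rfl rfl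
        have e2 : (if a = c ∧ b' = b then (1:ℝ) else 0)
            = (if b' = b ∧ a = c then 1 else 0) :=
          if_congr (Iff.intro (fun h => ⟨h.2, h.1⟩) (fun h => ⟨h.2, h.1⟩)) rfl rfl
        rw [e1, e2]; ring
      · intro a bb hab
        have h1 : ¬ (a = b ∧ bb = c) := by rintro ⟨rfl, rfl⟩; exact hab hbc
        have h2 : ¬ (a = c ∧ bb = b) := by
          rintro ⟨rfl, rfl⟩; exact hab ((hEsymm _ _).1 hbc)
        dsimp only
        rw [hsp a bb hab, if_neg h1, if_neg h2]; ring
      · intro a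
        rw [Finset.sum_add_distrib, hdiv a, Finset.sum_sub_distrib]
        have e1 : ∑ b', (if a = b ∧ b' = c then (1:ℝ) else 0)
            = if a = b then 1 else 0 := by
          by_cases hab : a = b <;> simp [hab]
        have e2 : ∑ b', (if a = c ∧ b' = b then (1:ℝ) else 0)
            = if a = c then 1 else 0 := by
          by_cases hac : a = c <;> simp [hac]
        rw [e1, e2]
        simp only [dlt]; ring

lemma flow_exists {N : ℕ} (E : Fin N → Fin N → Prop)
    (hEsymm : ∀ i j, E i j ↔ E j i) (hEirr : ∀ i, ¬ E i i)
    (hconn : ∀ i j : Fin N, Relation.ReflTransGen (fun a b => E a b) i j)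
    (i0 : Fin N) (v : Fin N → ℝ) (hv : ∑ i, v i = 0) :
    ∃ M : Fin N → Fin N → ℝ, (∀ a b, M a b = - M b a) ∧
      (∀ a b, ¬ E a b → M a b = 0) ∧ (∀ a, ∑ b, M a b = v a) := by
  choose f hsk hsp hdiv using fun j => flow_pair E hEsymm hEirr j i0 (hconn j i0)
  refine ⟨fun a b => ∑ j, v j * f j a b, ?_, ?_, ?_⟩
  · intro a b
    rw [← Finset.sum_neg_distrib]
    exact Finset.sum_congr rfl fun j _ => by rw [hsk j a b]; ring
  · intro a b hab
    exact Finset.sum_eq_zero fun j _ => by rw [hsp j a b hab, mul_zero]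
  · intro a
    rw [Finset.sum_comm]
    have key : ∀ j : Fin N, ∑ b, v j * f j a b = v j * dlt j i0 a := fun j => by
      rw [← Finset.mul_sum, hdiv j a]
    rw [Finset.sum_congr rfl fun j _ => key j]
    simp only [dlt, mul_sub]
    rw [Finset.sum_sub_distrib]
    have s1 : ∑ x, v x * (if a = x then (1:ℝ) else 0) = v a := by
      simp [mul_ite]
    have s2 : ∑ x, v x * (if a = i0 then (1:ℝ) else 0) = 0 := by
      rw [← Finset.sum_mul, hv, zero_mul]
    rw [s1, s2, sub_zero]

lemma exists_piece {K : ℕ} {t : Fin (K+2) → ℝ} (ht : StrictMono t)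
    (h0 : t 0 = 0) (h1 : t (Fin.last (K+1)) = 1) {s : ℝ}
    (hs : s ∈ Set.Ico (0:ℝ) 1) :
    ∃ k : Fin (K+1), s ∈ Set.Ico (t k.castSucc) (t k.succ) := by
  classical
  set A : Finset (Fin (K+1)) := Finset.univ.filter (fun k => t k.castSucc ≤ s) with hA
  have h0A : (0 : Fin (K+1)) ∈ A := by
    simp only [hA, Finset.mem_filter, Finset.mem_univ, true_and]
    have e : (Fin.castSucc (0 : Fin (K+1))) = (0 : Fin (K+2)) := rfl
    rw [e, h0]; exact hs.1
  have hAne : A.Nonempty := ⟨0, h0A⟩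
  set k := A.max' hAne with hk
  have hk1 : t k.castSucc ≤ s := by
    have := A.max'_mem hAne
    simp only [hA, Finset.mem_filter] at this; exact this.2
  refine ⟨k, hk1, ?_⟩
  by_contra hcon
  push_neg at hcon
  by_cases hK : (k : ℕ) = K
  · have e : k.succ = Fin.last (K+1) := by
      apply Fin.ext; simp [hK]
    rw [e, h1] at hcon
    exact absurd hcon (not_le.mpr hs.2)
  · have hkK : (k : ℕ) < K := lt_of_le_of_ne (Nat.lt_succ_iff.mp k.isLt) hK
    set k' : Fin (K+1) := ⟨(k : ℕ) + 1, by omega⟩ with hk'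
    have hcs : k'.castSucc = k.succ := by apply Fin.ext; simp [hk']
    have hk'A : k' ∈ A := by
      simp only [hA, Finset.mem_filter, Finset.mem_univ, true_and]
      rw [hcs]; exact hcon
    have hle := A.le_max' k' hk'A
    rw [← hk] at hle
    have : (k' : ℕ) ≤ (k : ℕ) := hle
    simp [hk'] at this

lemma piece_disjoint {K : ℕ} {t : Fin (K+2) → ℝ} (ht : StrictMono t)
    {a b : Fin (K+1)} (hab : a ≠ b) {s : ℝ}
    (ha : s ∈ Set.Ico (t a.castSucc) (t a.succ)) :
    s ∉ Set.Ico (t b.castSucc) (t b.succ) := by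
  intro hb
  rcases lt_or_gt_of_ne hab with h | h
  · have hle : a.succ ≤ b.castSucc := by
      rw [Fin.le_def, Fin.val_succ, Fin.coe_castSucc]
      exact Fin.lt_def.mp h
    exact absurd (ha.2.trans_le ((ht.monotone hle).trans hb.1)) (lt_irrefl s)
  · have hle : b.succ ≤ a.castSucc := by
      rw [Fin.le_def, Fin.val_succ, Fin.coe_castSucc]
      exact Fin.lt_def.mp h
    exact absurd (hb.2.trans_le ((ht.monotone hle).trans ha.1)) (lt_irrefl s)

lemma II_congr {f g : ℝ → ℝ} {a b : ℝ}
    (h : ∀ᵐ s ∂(volume : Measure ℝ), s ∈ Set.uIoc a b → f s = g s)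
    (hf : IntervalIntegrable f volume a b) : IntervalIntegrable g volume a b := by
  rw [intervalIntegrable_iff] at hf ⊢
  exact hf.congr (by
    filter_upwards [ae_restrict_mem measurableSet_uIoc, ae_restrict_of_ae h] with s h1 h2
    exact h2 h1)

lemma ae_ne_real (a : ℝ) : ∀ᵐ s : ℝ ∂volume, s ≠ a := by
  rw [ae_iff]
  simp only [not_not]
  rw [show {x : ℝ | x = a} = {a} from Set.setOf_eq_eq_singleton]
  exact measure_singleton a

set_option maxHeartbeats 1600000 in
/-- Nonemptiness of the feasible set for the specially perturbed optimal control
problem when no slope of `w` equals `−1`: for any endpoints in `P(G)` there is a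
feasible pair with finite action. -/
theorem special_feasible_set_nonempty_with_finite_action
    (N : ℕ) (hN : 2 ≤ N) (E : Fin N → Fin N → Prop) [DecidableRel E]
    (hEsymm : ∀ i j, E i j ↔ E j i) (hEirr : ∀ i, ¬ E i i)
    (hconn : ∀ i j : Fin N, Relation.ReflTransGen (fun a b => E a b) i j)
    (w wd : ℝ → ℝ) (hw : IsPWL w wd)
    (hslope : ∀ t ∈ Set.Ico (0 : ℝ) 1, wd t ≠ -1)
    (ρa ρb : Fin N → ℝ) (hρa : ProbVec ρa) (hρb : ProbVec ρb) :
    ∃ (ρ : ℝ → Fin N → ℝ) (m : ℝ → Fin N → Fin N → ℝ),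
      SFeasible E wd ρa ρb ρ m ∧ action E ρ m < ⊤ := by
  classical
  obtain ⟨K, tt, cc, htt, ht0, ht1, hwaff, hwdc⟩ := hw
  have hNpos : (0:ℝ) < N := by
    have : 0 < N := by omega
    exact_mod_cast this
  have hNne : (N:ℝ) ≠ 0 := ne_of_gt hNpos
  set u : Fin N → ℝ := fun _ => 1 / N with hu_def
  have hu0 : ∀ i, 0 < u i := fun i => by rw [hu_def]; positivity
  have husum : ∑ i : Fin N, u i = 1 := by
    rw [hu_def, Finset.sum_const, Finset.card_univ, Fintype.card_fin, nsmul_eq_mul]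
    field_simp
  have i0 : Fin N := ⟨0, by omega⟩
  have hva : ∑ i, (u i - ρa i) = 0 := by
    rw [Finset.sum_sub_distrib, husum, hρa.2, sub_self]
  have hvb : ∑ i, (u i - ρb i) = 0 := by
    rw [Finset.sum_sub_distrib, husum, hρb.2, sub_self]
  obtain ⟨Ma, hMask, hMasp, hMadiv⟩ := flow_exists E hEsymm hEirr hconn i0 _ hva
  obtain ⟨Mb, hMbsk, hMbsp, hMbdiv⟩ := flow_exists E hEsymm hEirr hconn i0 _ hvb
  set ρ : ℝ → Fin N → ℝ := fun t i => if t ≤ 1/2 then ρa i + 4*t^2*(u i - ρa i)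
      else ρb i + 4*(1-t)^2*(u i - ρb i) with hρ_def
  set m : ℝ → Fin N → Fin N → ℝ := fun t i j => if t ≤ 1/2
      then (-(8*t)/(1+wd t)) * Ma i j else ((8*(1-t))/(1+wd t)) * Mb i j with hm_def
  set ν : Measure ℝ := volume.restrict (Set.Icc (0:ℝ) 1) with hν_def
  haveI hνfin : IsFiniteMeasure ν := by
    constructor
    rw [hν_def, Measure.restrict_apply_univ, Real.volume_Icc]
    exact ENNReal.ofReal_lt_top
  have hwdne : ∀ s ∈ Set.Ico (0:ℝ) 1, (1 : ℝ) + wd s ≠ 0 := fun s hs h =>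
    hslope s hs (by linarith)
  set Cw : ℝ := Finset.univ.sup' ⟨0, Finset.mem_univ 0⟩
      (fun k : Fin (K+1) => |1/(1+cc k)|) with hCw_def
  have hCwmem : ∀ k : Fin (K+1), |1/(1+cc k)| ≤ Cw := fun k => by
    rw [hCw_def]
    exact Finset.le_sup' (fun k : Fin (K+1) => |1/(1+cc k)|) (Finset.mem_univ k)
  have hCw0 : (0:ℝ) ≤ Cw := le_trans (abs_nonneg _) (hCwmem 0)
  have hCw : ∀ s ∈ Set.Ico (0:ℝ) 1, |1/(1+wd s)| ≤ Cw := by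
    intro s hs
    obtain ⟨k, hk⟩ := exists_piece htt ht0 ht1 hs
    rw [hwdc k s hk]
    exact hCwmem k
  set wnice : ℝ → ℝ := fun s => ∑ k : Fin (K+1),
      Set.indicator (Set.Ico (tt k.castSucc) (tt k.succ)) (fun _ => cc k) s with hwn_def
  have hwn_meas : Measurable wnice := by
    apply Finset.measurable_sum
    intro k _
    exact measurable_const.indicator measurableSet_Ico
  have hwn_eq : ∀ s ∈ Set.Ico (0:ℝ) 1, wnice s = wd s := by
    intro s hs
    obtain ⟨k, hk⟩ := exists_piece htt ht0 ht1 hs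
    rw [hwdc k s hk, hwn_def]
    dsimp only
    rw [Finset.sum_eq_single k]
    · exact Set.indicator_of_mem hk _
    · intro b _ hb
      exact Set.indicator_of_notMem (piece_disjoint htt (Ne.symm hb) hk) _
    · intro h; exact absurd (Finset.mem_univ k) h
  -- support of m
  have hmsupp : ∀ s i j, ¬ E i j → m s i j = 0 := by
    intro s i j h
    rw [hm_def]; dsimp only
    split_ifs
    · rw [hMasp i j h, mul_zero]
    · rw [hMbsp i j h, mul_zero]
  -- inner sum simplification
  have hsum_m : ∀ i s, (∑ j, if E i j then m s i j else 0) = ∑ j, m s i j := by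
    intro i s
    refine Finset.sum_congr rfl fun j _ => ?_
    by_cases h : E i j
    · rw [if_pos h]
    · rw [if_neg h, hmsupp s i j h]
  set p : Fin N → ℝ → ℝ := fun i s => if s ≤ 1/2 then (-(8*(u i - ρa i)))*s
      else (8*(u i - ρb i))*(1-s) with hp_def
  have hFp : ∀ i, ∀ s ∈ Set.Ico (0:ℝ) 1,
      (1 + wd s) * ∑ j, (if E i j then m s i j else 0) = p i s := by
    intro i s hs
    rw [hsum_m i s, hm_def, hp_def]
    dsimp only
    split_ifs with h
    · have : ∑ j, (-(8*s)/(1+wd s)) * Ma i j = (-(8*s)/(1+wd s)) * (u i - ρa i) := by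
        rw [← Finset.mul_sum, hMadiv i]
      rw [this]
      field_simp [hwdne s hs]
    · have : ∑ j, ((8*(1-s))/(1+wd s)) * Mb i j = ((8*(1-s))/(1+wd s)) * (u i - ρb i) := by
        rw [← Finset.mul_sum, hMbdiv i]
      rw [this]
      field_simp [hwdne s hs]
  -- p measurable & integrable pieces
  have hp_meas : ∀ i, Measurable (p i) := by
    intro i
    rw [hp_def]
    exact Measurable.ite (measurableSet_le measurable_id measurable_const)
      (by fun_prop) (by fun_prop)
  have hf1cont : ∀ i, Continuous (fun s : ℝ => (-(8*(u i - ρa i)))*s) := by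
    intro i; fun_prop
  have hf2cont : ∀ i, Continuous (fun s : ℝ => (8*(u i - ρb i))*(1-s)) := by
    intro i; fun_prop
  have hpI1 : ∀ i, IntervalIntegrable (p i) volume 0 (1/2) := by
    intro i
    apply II_congr (f := fun s : ℝ => (-(8*(u i - ρa i)))*s) ?_
      ((hf1cont i).intervalIntegrable 0 (1/2))
    filter_upwards with s hs
    rw [Set.uIoc_of_le (by norm_num : (0:ℝ) ≤ 1/2)] at hs
    rw [hp_def]; dsimp only
    rw [if_pos hs.2]
  have hpI2 : ∀ i, ∀ t : ℝ, 1/2 < t → IntervalIntegrable (p i) volume (1/2) t := by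
    intro i t ht
    apply II_congr (f := fun s : ℝ => (8*(u i - ρb i))*(1-s)) ?_
      ((hf2cont i).intervalIntegrable (1/2) t)
    filter_upwards with s hs
    rw [Set.uIoc_of_le (le_of_lt ht)] at hs
    rw [hp_def]; dsimp only
    rw [if_neg (not_le.mpr hs.1)]
  -- key integral identity
  have hae_ico : ∀ t : ℝ, 0 ≤ t → t ≤ 1 →
      (∀ᵐ s : ℝ ∂volume, s ∈ Set.uIoc 0 t → s ∈ Set.Ico (0:ℝ) 1) := by
    intro t ht0' ht
    filter_upwards [ae_ne_real 1] with s hs1 hs2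
    rw [Set.uIoc_of_le ht0'] at hs2
    constructor
    · exact le_of_lt hs2.1
    · exact lt_of_le_of_ne (le_trans hs2.2 ht) hs1
  have hFeqp : ∀ i, ∀ t : ℝ, 0 ≤ t → t ≤ 1 →
      (∫ s in (0:ℝ)..t, (1 + wd s) * ∑ j, (if E i j then m s i j else 0))
        = ∫ s in (0:ℝ)..t, p i s := by
    intro i t ht0' ht
    apply intervalIntegral.integral_congr_ae
    filter_upwards [hae_ico t ht0' ht] with s hs1 hs2
    exact hFp i s (hs1 hs2)
  -- interval integrability of the drift (field 7)
  have hF_int : ∀ i, IntervalIntegrable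
      (fun s => (1 + wd s) * ∑ j, (if E i j then m s i j else 0)) volume 0 1 := by
    intro i
    apply II_congr (f := p i)
    · filter_upwards [hae_ico 1 zero_le_one le_rfl] with s hs1 hs2
      exact (hFp i s (hs1 hs2)).symm
    · exact (hpI1 i).trans (hpI2 i 1 (by norm_num))
  -- the ODE identity (field 8)
  have hODE : ∀ i, ∀ t ∈ Set.Icc (0:ℝ) 1,
      ρ t i = ρa i - ∫ s in (0:ℝ)..t,
        (1 + wd s) * ∑ j, (if E i j then m s i j else 0) := by
    intro i t ht
    rw [hFeqp i t ht.1 ht.2]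
    by_cases h : t ≤ 1/2
    · have e1 : (∫ s in (0:ℝ)..t, p i s)
          = ∫ s in (0:ℝ)..t, (-(8*(u i - ρa i)))*s := by
        apply intervalIntegral.integral_congr
        intro s hs
        rw [Set.uIcc_of_le ht.1] at hs
        rw [hp_def]; dsimp only
        rw [if_pos (hs.2.trans h)]
      rw [e1, intervalIntegral.integral_const_mul, integral_id]
      rw [hρ_def]; dsimp only
      rw [if_pos h]; ring
    · push_neg at h
      have hsplit := intervalIntegral.integral_add_adjacent_intervals
        (μ := volume) (f := p i) (hpI1 i) (hpI2 i t h)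
      rw [← hsplit]
      have e1 : (∫ s in (0:ℝ)..(1/2:ℝ), p i s)
          = ∫ s in (0:ℝ)..(1/2:ℝ), (-(8*(u i - ρa i)))*s := by
        apply intervalIntegral.integral_congr
        intro s hs
        rw [Set.uIcc_of_le (by norm_num : (0:ℝ) ≤ 1/2)] at hs
        rw [hp_def]; dsimp only
        rw [if_pos hs.2]
      have e2 : (∫ s in (1/2:ℝ)..t, p i s)
          = ∫ s in (1/2:ℝ)..t, (8*(u i - ρb i))*(1-s) := by
        apply intervalIntegral.integral_congr_ae
        filter_upwards with s hs
        rw [Set.uIoc_of_le (le_of_lt h)] at hs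
        rw [hp_def]; dsimp only
        rw [if_neg (not_le.mpr hs.1)]
      have hid : IntervalIntegrable (fun x : ℝ => x) volume (1/2) t :=
        continuous_id.intervalIntegrable _ _
      have e3 : (∫ s in (1/2:ℝ)..t, (8*(u i - ρb i))*(1-s))
          = (8*(u i - ρb i)) * ((t - 1/2) - (t^2 - (1/2)^2)/2) := by
        rw [intervalIntegral.integral_const_mul,
          intervalIntegral.integral_sub intervalIntegrable_const hid,
          intervalIntegral.integral_const, integral_id]
        simp only [smul_eq_mul, mul_one]
      rw [e1, e2, e3, intervalIntegral.integral_const_mul, integral_id]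
      rw [hρ_def]; dsimp only
      rw [if_neg (not_le.mpr h)]
      ring
  -- measurability of m
  set mnice : ℝ → Fin N → Fin N → ℝ := fun t i j => if t ≤ 1/2
      then (-(8*t)/(1+wnice t)) * Ma i j else ((8*(1-t))/(1+wnice t)) * Mb i j with hmn_def
  have hmn_meas : ∀ i j, Measurable (fun t => mnice t i j) := by
    intro i j
    rw [hmn_def]
    apply Measurable.ite (measurableSet_le measurable_id measurable_const)
    · exact (((measurable_const.mul measurable_id).neg).div
        (measurable_const.add hwn_meas)).mul_const _
    · exact (((measurable_const.mul (measurable_const.sub measurable_id))).div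
        (measurable_const.add hwn_meas)).mul_const _
  have hae_icoν : ∀ᵐ s ∂ν, s ∈ Set.Ico (0:ℝ) 1 := by
    rw [hν_def]
    filter_upwards [ae_restrict_mem measurableSet_Icc, ae_restrict_of_ae (ae_ne_real 1)]
      with s h1 h2
    exact ⟨h1.1, lt_of_le_of_ne h1.2 h2⟩
  have hm_eq_nice : ∀ i j, (fun t => m t i j) =ᵐ[ν] (fun t => mnice t i j) := by
    intro i j
    filter_upwards [hae_icoν] with s hs
    rw [hm_def, hmn_def]; dsimp only
    rw [hwn_eq s hs]
  -- bound on m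
  have hm_bd : ∀ i j, ∀ s ∈ Set.Ico (0:ℝ) 1, |m s i j| ≤ 8*Cw*(|Ma i j| + |Mb i j|) := by
    intro i j s hs
    have hcw := hCw s hs
    rw [hm_def]; dsimp only
    split_ifs with h
    · rw [abs_mul, div_eq_mul_one_div, abs_mul]
      have h1 : |-(8*s)| ≤ 8 := by
        rw [abs_neg, abs_of_nonneg (by linarith [hs.1] : (0:ℝ) ≤ 8*s)]
        linarith [hs.2]
      have h2 : |-(8*s)| * |1/(1+wd s)| ≤ 8 * Cw :=
        mul_le_mul h1 hcw (abs_nonneg _) (by norm_num)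
      have h3 : |Ma i j| ≤ |Ma i j| + |Mb i j| := le_add_of_nonneg_right (abs_nonneg _)
      exact mul_le_mul h2 h3 (abs_nonneg _) (by positivity)
    · rw [abs_mul, div_eq_mul_one_div, abs_mul]
      have h1 : |8*(1-s)| ≤ 8 := by
        rw [abs_of_nonneg (by nlinarith [hs.2] : (0:ℝ) ≤ 8*(1-s))]
        linarith [hs.1]
      have h2 : |8*(1-s)| * |1/(1+wd s)| ≤ 8 * Cw :=
        mul_le_mul h1 hcw (abs_nonneg _) (by norm_num)
      have h3 : |Mb i j| ≤ |Ma i j| + |Mb i j| := le_add_of_nonneg_left (abs_nonneg _)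
      exact mul_le_mul h2 h3 (abs_nonneg _) (by positivity)
  have hmemlp : ∀ i j, MemLp (fun t => m t i j) 2 ν := by
    intro i j
    have hms : AEStronglyMeasurable (fun t => m t i j) ν :=
      ⟨fun t => mnice t i j, (hmn_meas i j).stronglyMeasurable, hm_eq_nice i j⟩
    refine MemLp.of_bound hms (8*Cw*(|Ma i j| + |Mb i j|)) ?_
    filter_upwards [hae_icoν] with s hs
    rw [Real.norm_eq_abs]
    exact hm_bd i j s hs
  -- continuity of ρ
  have hρcont : Continuous ρ := by
    rw [hρ_def]
    apply continuous_pi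
    intro i
    apply Continuous.if_le (by fun_prop) (by fun_prop) continuous_id continuous_const
    intro x hx
    have hx' : x = 1/2 := hx
    rw [hx']
    norm_num
  -- ProbVec
  have hρprob : ∀ t ∈ Set.Icc (0:ℝ) 1, ProbVec (ρ t) := by
    intro t ht
    rw [hρ_def]
    constructor
    · intro i
      dsimp only
      split_ifs with h
      · have h4 : (0:ℝ) ≤ 4*t^2 := by positivity
        have h4' : 4*t^2 ≤ 1 := by nlinarith [ht.1]
        have ha := hρa.1 i
        have hb := le_of_lt (hu0 i)
        nlinarith [mul_nonneg (by linarith : (0:ℝ) ≤ 1 - 4*t^2) ha, mul_nonneg h4 hb]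
      · push_neg at h
        have h4 : (0:ℝ) ≤ 4*(1-t)^2 := by positivity
        have h4' : 4*(1-t)^2 ≤ 1 := by nlinarith [ht.2]
        have ha := hρb.1 i
        have hb := le_of_lt (hu0 i)
        nlinarith [mul_nonneg (by linarith : (0:ℝ) ≤ 1 - 4*(1-t)^2) ha, mul_nonneg h4 hb]
    · dsimp only
      split_ifs with h
      · rw [Finset.sum_add_distrib, ← Finset.mul_sum, hva, mul_zero, add_zero, hρa.2]
      · rw [Finset.sum_add_distrib, ← Finset.mul_sum, hvb, mul_zero, add_zero, hρb.2]
  -- VecField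
  have hVF : ∀ t, VecField E (m t) := by
    intro t
    refine ⟨?_, fun i j h => hmsupp t i j h⟩
    intro i j
    rw [hm_def]; dsimp only
    split_ifs
    · rw [hMask i j]; ring
    · rw [hMbsk i j]; ring
  -- endpoints
  have hρ0 : ρ 0 = ρa := by
    rw [hρ_def]; funext i; norm_num
  have hρ1 : ρ 1 = ρb := by
    rw [hρ_def]; funext i; norm_num
  refine ⟨ρ, m, ⟨hρcont.continuousOn, hρprob, hρ0, hρ1, hVF, hmemlp, hF_int, hODE⟩, ?_⟩
  -- finite action
  set Btot : ℝ≥0∞ := ∑ i : Fin N, ∑ j : Fin N,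
      ENNReal.ofReal (16*N*Cw^2*((Ma i j)^2 + (Mb i j)^2)) with hBtot
  have hbound : ∀ t ∈ Set.Ioo (0:ℝ) 1,
      (1/4 : ℝ≥0∞) * ∑ i, ∑ j, (if E i j then Lcost (thetaA (ρ t) i j) (m t i j) else 0)
        ≤ (1/4) * Btot := by
    intro t ht
    apply mul_le_mul_right
    rw [hBtot]
    apply Finset.sum_le_sum; intro i _
    apply Finset.sum_le_sum; intro j _
    by_cases hE : E i j
    · rw [if_pos hE]
      have htIco : t ∈ Set.Ico (0:ℝ) 1 := ⟨le_of_lt ht.1, ht.2⟩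
      have hcw := hCw t htIco
      by_cases h : t ≤ 1/2
      · -- first half
        have hρge : ∀ a : Fin N, 4*t^2*(1/N) ≤ ρ t a := by
          intro a
          rw [hρ_def]; dsimp only; rw [if_pos h]
          have ha := hρa.1 a
          have h4' : 4*t^2 ≤ 1 := by nlinarith [ht.1]
          simp only [hu_def]
          nlinarith
        have hθ : 4*t^2/N ≤ thetaA (ρ t) i j := by
          rw [thetaA]
          have h1 := hρge i; have h2 := hρge j
          rw [div_eq_mul_one_div]
          linarith
        have hθpos : 0 < 4*t^2/N := by
          have ht0 := ht.1
          positivity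
        have hLc : Lcost (thetaA (ρ t) i j) (m t i j)
            = ENNReal.ofReal ((m t i j)^2 / thetaA (ρ t) i j) := by
          rw [Lcost, if_pos (lt_of_lt_of_le hθpos hθ)]
        rw [hLc]
        apply ENNReal.ofReal_le_ofReal
        have hmabs : |m t i j| ≤ 8*t*Cw*|Ma i j| := by
          rw [hm_def]; dsimp only; rw [if_pos h]
          rw [abs_mul, div_eq_mul_one_div, abs_mul, abs_neg,
            abs_of_nonneg (by linarith [ht.1] : (0:ℝ) ≤ 8*t)]
          apply mul_le_mul_of_nonneg_right _ (abs_nonneg _)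
          exact mul_le_mul_of_nonneg_left hcw (by linarith [ht.1])
        have hm2 : (m t i j)^2 ≤ (8*t*Cw*|Ma i j|)^2 := by
          rw [← sq_abs (m t i j)]
          exact pow_le_pow_left₀ (abs_nonneg _) hmabs 2
        have hMb2 : (0:ℝ) ≤ 16*N*Cw^2*(Mb i j)^2 := by positivity
        calc (m t i j)^2 / thetaA (ρ t) i j
            ≤ (8*t*Cw*|Ma i j|)^2 / (4*t^2/N) := by
              apply div_le_div₀ (by positivity) hm2 hθpos hθ
          _ = 16*N*Cw^2*(Ma i j)^2 := by
              rw [mul_pow, mul_pow, sq_abs, div_eq_iff (ne_of_gt hθpos)]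
              field_simp
              ring
          _ ≤ 16*N*Cw^2*((Ma i j)^2 + (Mb i j)^2) := by nlinarith
      · -- second half
        push_neg at h
        have hρge : ∀ a : Fin N, 4*(1-t)^2*(1/N) ≤ ρ t a := by
          intro a
          rw [hρ_def]; dsimp only; rw [if_neg (not_le.mpr h)]
          have ha := hρb.1 a
          have h4' : 4*(1-t)^2 ≤ 1 := by nlinarith [ht.2]
          simp only [hu_def]
          nlinarith
        have hθ : 4*(1-t)^2/N ≤ thetaA (ρ t) i j := by
          rw [thetaA]
          have h1 := hρge i; have h2 := hρge j
          rw [div_eq_mul_one_div]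
          linarith
        have hθpos : 0 < 4*(1-t)^2/N := by
          have ht1 : (0:ℝ) < 1 - t := by linarith [ht.2]
          positivity
        have hLc : Lcost (thetaA (ρ t) i j) (m t i j)
            = ENNReal.ofReal ((m t i j)^2 / thetaA (ρ t) i j) := by
          rw [Lcost, if_pos (lt_of_lt_of_le hθpos hθ)]
        rw [hLc]
        apply ENNReal.ofReal_le_ofReal
        have hmabs : |m t i j| ≤ 8*(1-t)*Cw*|Mb i j| := by
          rw [hm_def]; dsimp only; rw [if_neg (not_le.mpr h)]
          rw [abs_mul, div_eq_mul_one_div, abs_mul,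
            abs_of_nonneg (by nlinarith [ht.2] : (0:ℝ) ≤ 8*(1-t))]
          apply mul_le_mul_of_nonneg_right _ (abs_nonneg _)
          exact mul_le_mul_of_nonneg_left hcw (by nlinarith [ht.2])
        have hm2 : (m t i j)^2 ≤ (8*(1-t)*Cw*|Mb i j|)^2 := by
          rw [← sq_abs (m t i j)]
          exact pow_le_pow_left₀ (abs_nonneg _) hmabs 2
        have hMa2 : (0:ℝ) ≤ 16*N*Cw^2*(Ma i j)^2 := by positivity
        have ht1ne : (1:ℝ) - t ≠ 0 := by intro hc; nlinarith [ht.2]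
        calc (m t i j)^2 / thetaA (ρ t) i j
            ≤ (8*(1-t)*Cw*|Mb i j|)^2 / (4*(1-t)^2/N) := by
              apply div_le_div₀ (by positivity) hm2 hθpos hθ
          _ = 16*N*Cw^2*(Mb i j)^2 := by
              rw [mul_pow, mul_pow, sq_abs, div_eq_iff (ne_of_gt hθpos)]
              field_simp
              ring
          _ ≤ 16*N*Cw^2*((Ma i j)^2 + (Mb i j)^2) := by nlinarith
    · rw [if_neg hE]; exact zero_le
  have haeIoo : ∀ᵐ t ∂ν, t ∈ Set.Ioo (0:ℝ) 1 := by
    rw [hν_def]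
    filter_upwards [ae_restrict_mem measurableSet_Icc,
      ae_restrict_of_ae (ae_ne_real 0), ae_restrict_of_ae (ae_ne_real 1)]
      with s h1 h2 h3
    exact ⟨lt_of_le_of_ne h1.1 (Ne.symm h2), lt_of_le_of_ne h1.2 h3⟩
  have hBfin : Btot ≠ ⊤ := by
    rw [hBtot]
    refine (ENNReal.sum_lt_top.mpr fun i _ => ENNReal.sum_lt_top.mpr fun j _ => ?_).ne
    exact ENNReal.ofReal_lt_top
  rw [action]
  calc (∫⁻ t in Set.Icc (0:ℝ) 1, (1/4) * ∑ i, ∑ j,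
        (if E i j then Lcost (thetaA (ρ t) i j) (m t i j) else 0))
      ≤ ∫⁻ _ in Set.Icc (0:ℝ) 1, (1/4) * Btot := by
        apply lintegral_mono_ae
        rw [← hν_def]
        filter_upwards [haeIoo] with t htIoo
        exact hbound t htIoo
    _ = (1/4) * Btot * volume (Set.Icc (0:ℝ) 1) := by
        rw [lintegral_const, Measure.restrict_apply_univ]
    _ < ⊤ := by
        apply ENNReal.mul_lt_top
        · exact ENNReal.mul_lt_top (by norm_num) (lt_top_iff_ne_top.mpr hBfin)
        · rw [Real.volume_Icc]; exact ENNReal.ofReal_lt_top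

end
end

section
/- (Boundary behavior on the three-node path graph for the specially perturbed problem.) Let V = {1,2,3}, E = {(1,2),(2,3)} (undirected, weights 1), θ_ij(ρ) = (ρ_i + ρ_j)/2, ρ^a = (0,0,1), ρ^b = (0,1/2,1/2), and let w : [0,1] → ℝ be continuous piecewise linear with every slope different from −1. If (ρ, m) ∈ S_F(ρ^a, ρ^b) has finite action A(ρ, m) < ∞ and ρ₁ is not almost everywhere zero, then there exists (ρ̃, m̃) ∈ S_F(ρ^a, ρ^b) with A(ρ̃, m̃) < A(ρ, m). Consequently, every minimizer (ρ*, m*) of A over S_F(ρ^a, ρ^b) satisfies ρ*₁(t) = 0 for all t ∈ [0,1], i.e. the optimal path lies on the boundary of P(G). -/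
open scoped BigOperators ENNReal
open MeasureTheory

noncomputable section

/-- The edge relation of the three-node path graph `1 — 2 — 3`
(vertices indexed `0, 1, 2`). -/
def pathE3 : Fin 3 → Fin 3 → Prop := fun i j =>
  (i.val = 0 ∧ j.val = 1) ∨ (i.val = 1 ∧ j.val = 0) ∨
  (i.val = 1 ∧ j.val = 2) ∨ (i.val = 2 ∧ j.val = 1)

instance : DecidableRel pathE3 := fun i j => by unfold pathE3; infer_instance

lemma Lcost_zero_right {x : ℝ} (hx : 0 ≤ x) : Lcost x 0 = 0 := by
  unfold Lcost
  rcases hx.lt_or_eq with h | h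
  · simp [h]
  · simp [← h, lt_irrefl]

lemma Lcost_anti {x x' : ℝ} (y : ℝ) (hx : 0 ≤ x) (h : x ≤ x') : Lcost x' y ≤ Lcost x y := by
  rcases hx.lt_or_eq with h0 | h0
  · have hx' : 0 < x' := lt_of_lt_of_le h0 h
    unfold Lcost
    rw [if_pos h0, if_pos hx']
    exact ENNReal.ofReal_le_ofReal (by gcongr)
  · by_cases hy : y = 0
    · subst hy
      rw [Lcost_zero_right (h0 ▸ h), Lcost_zero_right hx]
    · have htop : Lcost x y = ⊤ := by
        unfold Lcost
        rw [if_neg (by rw [← h0]; exact lt_irrefl 0), if_neg (by tauto)]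
      rw [htop]; exact le_top

lemma eq_zero_of_Lcost_eq_zero {x y : ℝ} (hx : 0 ≤ x) (h : Lcost x y = 0) : y = 0 := by
  unfold Lcost at h
  split_ifs at h with h1 h2
  · have h0 : y ^ 2 / x ≤ 0 := ENNReal.ofReal_eq_zero.1 h
    have h2' : 0 ≤ y ^ 2 / x := div_nonneg (sq_nonneg y) (le_of_lt h1)
    have h3 : y ^ 2 / x = 0 := le_antisymm h0 h2'
    rw [div_eq_zero_iff] at h3
    rcases h3 with h3 | h3
    · exact pow_eq_zero_iff (by norm_num) |>.1 h3
    · exact absurd h3 (ne_of_gt h1)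
  · exact h2.2
  · exact absurd h (by simp)

lemma AEMeasurable.lcost {α} [MeasurableSpace α] {μ : Measure α} {a b : α → ℝ}
    (ha : AEMeasurable a μ) (hb : AEMeasurable b μ) :
    AEMeasurable (fun t => Lcost (a t) (b t)) μ :=
  measurable_Lcost.comp_aemeasurable (ha.prodMk hb)

lemma ae_ne_one : ∀ᵐ s ∂(volume : Measure ℝ), s ≠ 1 := by
  rw [ae_iff]
  simpa using measure_singleton (1 : ℝ)

lemma const_on_Ico (f : ℝ → ℝ) (r : ℝ) (hf : ∀ s ∈ Set.Ico (0:ℝ) 1, f s = r) :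
    IntervalIntegrable f volume 0 1 ∧
    ∀ t ∈ Set.Icc (0:ℝ) 1, ∫ s in (0:ℝ)..t, f s = t * r := by
  have hae : ∀ t ∈ Set.Icc (0:ℝ) 1,
      ∀ᵐ s ∂(volume : Measure ℝ), s ∈ Set.uIoc 0 t → f s = r := by
    intro t ht
    filter_upwards [ae_ne_one] with s hs1 hmem
    rw [Set.uIoc_of_le ht.1] at hmem
    exact hf s ⟨le_of_lt hmem.1, lt_of_le_of_ne (hmem.2.trans ht.2) hs1⟩
  constructor
  · rw [intervalIntegrable_iff]
    have hc : IntegrableOn (fun _ => r) (Set.uIoc (0:ℝ) 1) volume :=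
      integrableOn_const (by
        rw [Set.uIoc_of_le (by norm_num : (0:ℝ) ≤ 1)]; exact measure_Ioc_lt_top.ne)
    apply hc.congr
    exact (ae_restrict_iff' measurableSet_uIoc).2
      (by filter_upwards [hae 1 (by norm_num)] with s hs hmem using (hs hmem).symm)
  · intro t ht
    rw [intervalIntegral.integral_congr_ae (g := fun _ => r)
      (by filter_upwards [hae t ht] with s hs hmem using hs hmem)]
    simp [mul_comm]
lemma finmeas_Icc : IsFiniteMeasure (volume.restrict (Set.Icc (0:ℝ) 1)) :=
  ⟨by rw [Measure.restrict_apply_univ]; exact measure_Icc_lt_top⟩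

lemma exists_finite (w wd : ℝ → ℝ) (hw : IsPWL w wd)
    (hslope : ∀ t ∈ Set.Ico (0 : ℝ) 1, wd t ≠ -1) :
    ∃ (ρ : ℝ → Fin 3 → ℝ) (m : ℝ → Fin 3 → Fin 3 → ℝ),
      SFeasible pathE3 wd ![0, 0, 1] ![0, 1/2, 1/2] ρ m ∧ action pathE3 ρ m < ⊤ := by
  classical
  haveI := finmeas_Icc
  obtain ⟨K, T, c, hTmono, hT0, hT1, -, hdc⟩ := hw
  set g : ℝ → ℝ := fun s => -1 / (2 * (1 + wd s)) with hg
  set σ : ℝ → ℝ := fun s => ∑ k : Fin (K+1),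
    Set.indicator (Set.Ico (T k.castSucc) (T k.succ)) (fun _ => -1 / (2 * (1 + c k))) s with hσd
  -- covering
  have hcover : ∀ s : ℝ, 0 ≤ s → s < 1 →
      ∃ k : Fin (K+1), T k.castSucc ≤ s ∧ s < T k.succ := by
    intro s hs0 hs1
    set S : Finset (Fin (K+1)) := Finset.univ.filter (fun k => T k.castSucc ≤ s) with hS
    have h0S : (0 : Fin (K+1)) ∈ S := by
      simp only [hS, Finset.mem_filter, Finset.mem_univ, true_and]
      rw [Fin.castSucc_zero, hT0]; exact hs0
    have hne : S.Nonempty := ⟨0, h0S⟩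
    set k := S.max' hne with hk
    have hk1 : T k.castSucc ≤ s := by
      have := S.max'_mem hne
      simp only [hS, Finset.mem_filter] at this
      exact this.2
    refine ⟨k, hk1, ?_⟩
    by_contra hlt
    push_neg at hlt
    by_cases hK : k.val = K
    · have hlast : k.succ = Fin.last (K+1) := by
        apply Fin.ext; simp [Fin.val_succ, hK]
      rw [hlast, hT1] at hlt; linarith
    · have hkK : k.val < K := lt_of_le_of_ne (Nat.lt_succ_iff.mp k.isLt) hK
      set k' : Fin (K+1) := ⟨k.val + 1, by omega⟩ with hk'
      have hck : (k'.castSucc : Fin (K+2)) = k.succ := by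
        apply Fin.ext; simp [hk']
      have hk'S : k' ∈ S := by
        simp only [hS, Finset.mem_filter, Finset.mem_univ, true_and]
        rw [hck]; exact hlt
      have hle := S.le_max' k' hk'S
      rw [← hk] at hle
      have : k.val + 1 ≤ k.val := hle
      omega
  have hσ : ∀ s ∈ Set.Ico (0:ℝ) 1, σ s = g s := by
    intro s hs
    obtain ⟨k, hk1, hk2⟩ := hcover s hs.1 hs.2
    have hwds : wd s = c k := hdc k s ⟨hk1, hk2⟩
    simp only [hσd, hg, hwds]
    rw [Finset.sum_eq_single_of_mem k (Finset.mem_univ k)]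
    · rw [Set.indicator_of_mem (Set.mem_Ico.mpr ⟨hk1, hk2⟩)]
    · intro b _ hbk
      apply Set.indicator_of_notMem
      intro hmem
      rcases lt_or_gt_of_ne hbk with hb | hb
      · have hv : (b.succ : Fin (K+2)) ≤ k.castSucc := by
          rw [Fin.le_def]
          simp only [Fin.val_succ, Fin.coe_castSucc]
          exact Fin.lt_def.mp hb
        have := hTmono.monotone hv
        have := hmem.2
        linarith
      · have hv : (k.succ : Fin (K+2)) ≤ b.castSucc := by
          rw [Fin.le_def]
          simp only [Fin.val_succ, Fin.coe_castSucc]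
          exact Fin.lt_def.mp hb
        have := hTmono.monotone hv
        have := hmem.1
        linarith
  have hσmeas : Measurable σ :=
    Finset.measurable_sum _ fun k _ => measurable_const.indicator measurableSet_Ico
  set C : ℝ := ∑ k : Fin (K+1), |(-1 : ℝ) / (2 * (1 + c k))| with hC
  have hσbd : ∀ s, |σ s| ≤ C := by
    intro s
    refine le_trans (Finset.abs_sum_le_sum_abs _ _) (Finset.sum_le_sum fun k _ => ?_)
    rw [Set.indicator_apply]
    split_ifs
    · exact le_refl _
    · rw [abs_zero]; exact abs_nonneg _
  -- a.e. facts about g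
  have hgs : g =ᵐ[volume.restrict (Set.Icc (0:ℝ) 1)] σ := by
    filter_upwards [ae_restrict_mem measurableSet_Icc, ae_restrict_of_ae ae_ne_one]
      with s hs hs1
    have hmem : s ∈ Set.Ico (0:ℝ) 1 := Set.mem_Ico.mpr ⟨hs.1, lt_of_le_of_ne hs.2 hs1⟩
    exact (hσ s hmem).symm
  have hgmem : MemLp g 2 (volume.restrict (Set.Icc (0:ℝ) 1)) := by
    refine MemLp.of_bound (hσmeas.aestronglyMeasurable.congr hgs.symm) C ?_
    filter_upwards [hgs] with s hsg
    rw [Real.norm_eq_abs, hsg]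
    exact hσbd s
  -- the candidate pair
  set P : ℝ → Fin 3 → ℝ := fun t => ![0, t/2, 1 - t/2] with hP
  set M : ℝ → Fin 3 → Fin 3 → ℝ := fun s i j =>
    if i.val = 1 ∧ j.val = 2 then g s else if i.val = 2 ∧ j.val = 1 then -(g s) else 0 with hM
  have hsum0 : ∀ s, (∑ j, if pathE3 0 j then M s 0 j else 0) = 0 := by
    intro s; simp [pathE3, Fin.sum_univ_three, hM]
  have hsum1 : ∀ s, (∑ j, if pathE3 1 j then M s 1 j else 0) = g s := by
    intro s; simp [pathE3, Fin.sum_univ_three, hM]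
  have hsum2 : ∀ s, (∑ j, if pathE3 2 j then M s 2 j else 0) = -(g s) := by
    intro s; simp [pathE3, Fin.sum_univ_three, hM]
  have hgid : ∀ s ∈ Set.Ico (0:ℝ) 1, (1 + wd s) * g s = -(1/2) := by
    intro s hs
    have hx : 1 + wd s ≠ 0 := by
      intro h'; exact hslope s hs (by linarith)
    simp only [hg]
    field_simp
  have key0 := const_on_Ico (fun s => (1 + wd s) * ∑ j, (if pathE3 0 j then M s 0 j else 0)) 0
    (by intro s hs; rw [hsum0 s, mul_zero])
  have key1 := const_on_Ico (fun s => (1 + wd s) * ∑ j, (if pathE3 1 j then M s 1 j else 0))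
    (-(1/2)) (by intro s hs; rw [hsum1 s]; exact hgid s hs)
  have key2 := const_on_Ico (fun s => (1 + wd s) * ∑ j, (if pathE3 2 j then M s 2 j else 0))
    (1/2) (by intro s hs; rw [hsum2 s, mul_neg, hgid s hs]; ring)
  refine ⟨P, M, ⟨?_, ?_, ?_, ?_, ?_, ?_, ?_, ?_⟩, ?_⟩
  · -- continuity
    apply continuousOn_pi.2
    intro i
    fin_cases i <;> simp [hP] <;> fun_prop
  · -- ProbVec
    intro t ht
    constructor
    · intro i
      have h1 := ht.1
      have h2 := ht.2
      fin_cases i <;> simp [hP] <;> linarith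
    · rw [Fin.sum_univ_three]; simp [hP]
  · funext i; fin_cases i <;> norm_num [hP]
  · funext i; fin_cases i <;> norm_num [hP]
  · -- VecField
    intro t
    constructor
    · intro i j; fin_cases i <;> fin_cases j <;> simp [hM]
    · intro i j hE; fin_cases i <;> fin_cases j <;> simp [hM, pathE3] at hE ⊢
  · -- Memℒp
    intro i j
    fin_cases i <;> fin_cases j <;> simp only [hM] <;> norm_num
    · exact hgmem
    · exact hgmem.neg
  · -- IntervalIntegrable
    intro i
    fin_cases i
    · exact key0.1
    · exact key1.1
    · exact key2.1
  · -- integrated ODE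
    intro i t ht
    have e0 : (∫ s in (0:ℝ)..t, (1 + wd s) * ∑ j, (if pathE3 0 j then M s 0 j else 0)) = t * 0 :=
      key0.2 t ht
    have e1 : (∫ s in (0:ℝ)..t, (1 + wd s) * ∑ j, (if pathE3 1 j then M s 1 j else 0)) = t * (-(1/2)) :=
      key1.2 t ht
    have e2 : (∫ s in (0:ℝ)..t, (1 + wd s) * ∑ j, (if pathE3 2 j then M s 2 j else 0)) = t * (1/2) :=
      key2.2 t ht
    fin_cases i
    · show P t 0 = ![(0:ℝ),0,1] 0 - ∫ s in (0:ℝ)..t,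
        (1 + wd s) * ∑ j, (if pathE3 0 j then M s 0 j else 0)
      rw [e0]; norm_num [hP]
    · show P t 1 = ![(0:ℝ),0,1] 1 - ∫ s in (0:ℝ)..t,
        (1 + wd s) * ∑ j, (if pathE3 1 j then M s 1 j else 0)
      rw [e1]; norm_num [hP]; ring
    · show P t 2 = ![(0:ℝ),0,1] 2 - ∫ s in (0:ℝ)..t,
        (1 + wd s) * ∑ j, (if pathE3 2 j then M s 2 j else 0)
      rw [e2]; norm_num [hP, Matrix.cons_val_two, Matrix.tail_cons]; ring
  · -- finite action
    set B : ℝ≥0∞ := ENNReal.ofReal (C^2 / (1/2)) with hB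
    have hact : action pathE3 P M = ∫⁻ t in Set.Icc (0:ℝ) 1,
        (1/4) * ∑ i, ∑ j, (if pathE3 i j then Lcost (thetaA (P t) i j) (M t i j) else 0) := rfl
    have hbd : ∀ᵐ t ∂(volume.restrict (Set.Icc (0:ℝ) 1)),
        (1/4 : ℝ≥0∞) * ∑ i, ∑ j, (if pathE3 i j then Lcost (thetaA (P t) i j) (M t i j) else 0)
          ≤ (1/4) * (B + B) := by
      filter_upwards [ae_restrict_mem measurableSet_Icc, hgs] with t ht htg
      have hsum : (∑ i, ∑ j, (if pathE3 i j then Lcost (thetaA (P t) i j) (M t i j) else 0))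
          = Lcost (thetaA (P t) 0 1) 0 + Lcost (thetaA (P t) 1 0) 0
            + Lcost (thetaA (P t) 1 2) (g t) + Lcost (thetaA (P t) 2 1) (-(g t)) := by
        simp [pathE3, Fin.sum_univ_three, hM]
        ring
      have hz1 : Lcost (thetaA (P t) 0 1) 0 = 0 := Lcost_zero_right (by
        simp [thetaA, hP]; linarith [ht.1])
      have hz2 : Lcost (thetaA (P t) 1 0) 0 = 0 := Lcost_zero_right (by
        simp [thetaA, hP]; linarith [ht.1])
      have hth : thetaA (P t) 1 2 = 1/2 := by
        simp [thetaA, hP]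
      have hth2 : thetaA (P t) 2 1 = 1/2 := by
        simp [thetaA, hP]
      have hgb : g t ^ 2 ≤ C ^ 2 := by
        rw [htg, ← sq_abs]
        exact pow_le_pow_left₀ (abs_nonneg _) (hσbd t) 2
      have hL1 : Lcost (1/2) (g t) ≤ B := by
        rw [hB, Lcost, if_pos (by norm_num : (0:ℝ) < 1/2)]
        exact ENNReal.ofReal_le_ofReal (by gcongr)
      have hL2 : Lcost (1/2) (-(g t)) ≤ B := by
        rw [hB, Lcost, if_pos (by norm_num : (0:ℝ) < 1/2)]
        refine ENNReal.ofReal_le_ofReal ?_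
        have hneg : (-(g t)) ^ 2 = g t ^ 2 := by ring
        rw [hneg]
        gcongr
      rw [hsum, hz1, hz2, hth, hth2]
      apply mul_le_mul_right
      calc 0 + 0 + Lcost (1/2) (g t) + Lcost (1/2) (-(g t))
          = Lcost (1/2) (g t) + Lcost (1/2) (-(g t)) := by simp
        _ ≤ B + B := add_le_add hL1 hL2
    rw [hact]
    calc (∫⁻ t in Set.Icc (0:ℝ) 1,
        (1/4) * ∑ i, ∑ j, (if pathE3 i j then Lcost (thetaA (P t) i j) (M t i j) else 0))
        ≤ ∫⁻ _ in Set.Icc (0:ℝ) 1, (1/4) * (B + B) := lintegral_mono_ae hbd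
      _ = (1/4) * (B + B) * volume (Set.Icc (0:ℝ) 1) := setLIntegral_const _ _
      _ < ⊤ := by
          rw [lt_top_iff_ne_top]
          apply ENNReal.mul_ne_top
          apply ENNReal.mul_ne_top
          · simp
          · exact ENNReal.add_ne_top.2 ⟨ENNReal.ofReal_ne_top, ENNReal.ofReal_ne_top⟩
          · rw [Real.volume_Icc]; exact ENNReal.ofReal_ne_top



lemma improve (wd : ℝ → ℝ) (ρ : ℝ → Fin 3 → ℝ) (m : ℝ → Fin 3 → Fin 3 → ℝ)
    (hF : SFeasible pathE3 wd ![0, 0, 1] ![0, 1/2, 1/2] ρ m)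
    (hfin : action pathE3 ρ m < ⊤)
    (hne : ¬ (∀ᵐ t ∂(volume.restrict (Set.Icc (0 : ℝ) 1)), ρ t 0 = 0)) :
    ∃ (ρ' : ℝ → Fin 3 → ℝ) (m' : ℝ → Fin 3 → Fin 3 → ℝ),
      SFeasible pathE3 wd ![0, 0, 1] ![0, 1/2, 1/2] ρ' m' ∧
      action pathE3 ρ' m' < action pathE3 ρ m := by
  classical
  haveI := finmeas_Icc
  obtain ⟨hc, hPb, h0, h1, hVF, hL2, hInt, hODE⟩ := hF
  have skew : ∀ s i j, m s i j = - m s j i := fun s => (hVF s).1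
  set Q : ℝ → Fin 3 → ℝ := fun t => ![0, ρ t 0 + ρ t 1, ρ t 2] with hQ
  set M : ℝ → Fin 3 → Fin 3 → ℝ := fun s i j =>
    if i.val = 1 ∧ j.val = 2 then m s 1 2 else if i.val = 2 ∧ j.val = 1 then m s 2 1 else 0
    with hM
  have hsum0 : ∀ s, (∑ j, if pathE3 0 j then m s 0 j else 0) = m s 0 1 := by
    intro s; simp [pathE3, Fin.sum_univ_three]
  have hsum1 : ∀ s, (∑ j, if pathE3 1 j then m s 1 j else 0) = m s 1 0 + m s 1 2 := by
    intro s; simp [pathE3, Fin.sum_univ_three]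
  have hsum2 : ∀ s, (∑ j, if pathE3 2 j then m s 2 j else 0) = m s 2 1 := by
    intro s; simp [pathE3, Fin.sum_univ_three]
  have hsum0' : ∀ s, (∑ j, if pathE3 0 j then M s 0 j else 0) = 0 := by
    intro s; simp [pathE3, Fin.sum_univ_three, hM]
  have hsum1' : ∀ s, (∑ j, if pathE3 1 j then M s 1 j else 0) = m s 1 2 := by
    intro s; simp [pathE3, Fin.sum_univ_three, hM]
  have hsum2' : ∀ s, (∑ j, if pathE3 2 j then M s 2 j else 0) = m s 2 1 := by
    intro s; simp [pathE3, Fin.sum_univ_three, hM]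
  have c0 : ContinuousOn (fun t => ρ t 0) (Set.Icc 0 1) :=
    (continuous_apply _).comp_continuousOn hc
  have c1 : ContinuousOn (fun t => ρ t 1) (Set.Icc 0 1) :=
    (continuous_apply _).comp_continuousOn hc
  have c2 : ContinuousOn (fun t => ρ t 2) (Set.Icc 0 1) :=
    (continuous_apply _).comp_continuousOn hc
  have hfeas : SFeasible pathE3 wd ![0, 0, 1] ![0, 1/2, 1/2] Q M := by
    refine ⟨?_, ?_, ?_, ?_, ?_, ?_, ?_, ?_⟩
    · apply continuousOn_pi.2
      intro i
      fin_cases i <;> simp [hQ]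
      · exact continuousOn_const
      · exact c0.add c1
      · exact c2
    · intro t ht
      obtain ⟨hnn, hsum⟩ := hPb t ht
      have n0 := hnn 0
      have n1 := hnn 1
      have n2 := hnn 2
      constructor
      · intro i
        fin_cases i <;> simp [hQ] <;> linarith
      · rw [Fin.sum_univ_three] at hsum ⊢
        simp [hQ]
        linarith
    · funext i; fin_cases i <;> norm_num [hQ, h0, Matrix.cons_val_two]
    · funext i; fin_cases i <;> norm_num [hQ, h1, Matrix.cons_val_two]
    · intro s
      constructor
      · intro i j
        fin_cases i <;> fin_cases j <;> simp [hM] <;> linarith [skew s 1 2, skew s 2 1]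
      · intro i j hE
        fin_cases i <;> fin_cases j <;> simp [hM, pathE3] at hE ⊢
    · intro i j
      fin_cases i <;> fin_cases j <;> simp only [hM] <;> norm_num
      · exact hL2 1 2
      · exact hL2 2 1
    · intro i
      have k1 : IntervalIntegrable (fun s => (1 + wd s) * (m s 0 1)) volume 0 1 := by
        have := hInt 0; simpa only [hsum0] using this
      have k2 : IntervalIntegrable (fun s => (1 + wd s) * (m s 1 0 + m s 1 2)) volume 0 1 := by
        have := hInt 1; simpa only [hsum1] using this
      have k3 : IntervalIntegrable (fun s => (1 + wd s) * (m s 2 1)) volume 0 1 := by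
        have := hInt 2; simpa only [hsum2] using this
      fin_cases i
      · show IntervalIntegrable
          (fun s => (1 + wd s) * ∑ j, (if pathE3 0 j then M s 0 j else 0)) volume 0 1
        simp only [hsum0', mul_zero]
        exact intervalIntegrable_const
      · show IntervalIntegrable
          (fun s => (1 + wd s) * ∑ j, (if pathE3 1 j then M s 1 j else 0)) volume 0 1
        have heq : (fun s => (1 + wd s) * ∑ j, (if pathE3 1 j then M s 1 j else 0))
            = fun s => (1 + wd s) * (m s 0 1) + (1 + wd s) * (m s 1 0 + m s 1 2) := by
          funext s
          rw [hsum1' s, skew s 1 0]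
          ring
        rw [heq]
        exact k1.add k2
      · show IntervalIntegrable
          (fun s => (1 + wd s) * ∑ j, (if pathE3 2 j then M s 2 j else 0)) volume 0 1
        simp only [hsum2']
        exact k3
    · intro i t ht
      have hsub : Set.uIcc (0:ℝ) t ⊆ Set.uIcc (0:ℝ) 1 := by
        rw [Set.uIcc_of_le ht.1, Set.uIcc_of_le zero_le_one]
        exact Set.Icc_subset_Icc le_rfl ht.2
      have I0 : IntervalIntegrable (fun s => (1 + wd s) * (m s 0 1)) volume 0 t := by
        have := (hInt 0).mono_set hsub; simpa only [hsum0] using this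
      have I1 : IntervalIntegrable (fun s => (1 + wd s) * (m s 1 0 + m s 1 2)) volume 0 t := by
        have := (hInt 1).mono_set hsub; simpa only [hsum1] using this
      fin_cases i
      · show Q t 0 = ![(0:ℝ),0,1] 0 - ∫ s in (0:ℝ)..t,
          (1 + wd s) * ∑ j, (if pathE3 0 j then M s 0 j else 0)
        simp [hQ, hsum0']
      · show Q t 1 = ![(0:ℝ),0,1] 1 - ∫ s in (0:ℝ)..t,
          (1 + wd s) * ∑ j, (if pathE3 1 j then M s 1 j else 0)
        have e0 := hODE 0 t ht
        have e1 := hODE 1 t ht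
        have hquv : Q t 1 = ρ t 0 + ρ t 1 := by simp [hQ]
        have hIsum : (∫ s in (0:ℝ)..t, (1 + wd s) * ∑ j, (if pathE3 0 j then m s 0 j else 0))
            + (∫ s in (0:ℝ)..t, (1 + wd s) * ∑ j, (if pathE3 1 j then m s 1 j else 0))
            = ∫ s in (0:ℝ)..t, (1 + wd s) * ∑ j, (if pathE3 1 j then M s 1 j else 0) := by
          simp only [hsum0, hsum1, hsum1']
          rw [← intervalIntegral.integral_add I0 I1]
          apply intervalIntegral.integral_congr
          intro s _
          dsimp only
          rw [skew s 1 0]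
          ring
        rw [hquv, e0, e1, ← hIsum]
        norm_num
        ring
      · show Q t 2 = ![(0:ℝ),0,1] 2 - ∫ s in (0:ℝ)..t,
          (1 + wd s) * ∑ j, (if pathE3 2 j then M s 2 j else 0)
        have e2 := hODE 2 t ht
        have hquv : Q t 2 = ρ t 2 := by simp [hQ]
        simp only [hsum2']
        rw [hquv, e2]
        simp only [hsum2]
  -- action comparison
  set μr := volume.restrict (Set.Icc (0:ℝ) 1) with hμr
  have haρ : ∀ i : Fin 3, AEMeasurable (fun s => ρ s i) μr := fun i =>
    ((continuous_apply i).comp_continuousOn hc).aemeasurable measurableSet_Icc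
  have ham : ∀ i j : Fin 3, AEMeasurable (fun s => m s i j) μr := fun i j =>
    (hL2 i j).aestronglyMeasurable.aemeasurable
  set H : ℝ → ℝ≥0∞ := fun s =>
    (1/4 : ℝ≥0∞) * (Lcost (thetaA (ρ s) 0 1) (m s 0 1) + Lcost (thetaA (ρ s) 1 0) (m s 1 0))
    with hH
  have hHaem : AEMeasurable H μr := by
    apply AEMeasurable.const_mul
    apply AEMeasurable.add
    · exact AEMeasurable.lcost (((haρ 0).add (haρ 1)).div_const 2) (ham 0 1)
    · exact AEMeasurable.lcost (((haρ 1).add (haρ 0)).div_const 2) (ham 1 0)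
  have key : ∀ t ∈ Set.Icc (0:ℝ) 1,
      ((1/4 : ℝ≥0∞) * ∑ i, ∑ j, (if pathE3 i j then Lcost (thetaA (Q t) i j) (M t i j) else 0))
        + H t
        ≤ (1/4 : ℝ≥0∞) * ∑ i, ∑ j,
            (if pathE3 i j then Lcost (thetaA (ρ t) i j) (m t i j) else 0) := by
    intro t ht
    obtain ⟨hnn, -⟩ := hPb t ht
    have n0 := hnn 0
    have n1 := hnn 1
    have n2 := hnn 2
    have eQ : (∑ i, ∑ j, (if pathE3 i j then Lcost (thetaA (Q t) i j) (M t i j) else 0))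
        = Lcost (thetaA (Q t) 0 1) 0 + Lcost (thetaA (Q t) 1 0) 0
          + Lcost (thetaA (Q t) 1 2) (m t 1 2) + Lcost (thetaA (Q t) 2 1) (m t 2 1) := by
      simp [pathE3, Fin.sum_univ_three, hM]
      ring
    have eP : (∑ i, ∑ j, (if pathE3 i j then Lcost (thetaA (ρ t) i j) (m t i j) else 0))
        = Lcost (thetaA (ρ t) 0 1) (m t 0 1) + Lcost (thetaA (ρ t) 1 0) (m t 1 0)
          + Lcost (thetaA (ρ t) 1 2) (m t 1 2) + Lcost (thetaA (ρ t) 2 1) (m t 2 1) := by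
      simp [pathE3, Fin.sum_univ_three]
      ring
    have hz1 : Lcost (thetaA (Q t) 0 1) 0 = 0 := Lcost_zero_right (by
      simp [thetaA, hQ]; linarith)
    have hz2 : Lcost (thetaA (Q t) 1 0) 0 = 0 := Lcost_zero_right (by
      simp [thetaA, hQ]; linarith)
    have hm12 : Lcost (thetaA (Q t) 1 2) (m t 1 2) ≤ Lcost (thetaA (ρ t) 1 2) (m t 1 2) := by
      apply Lcost_anti
      · show (0:ℝ) ≤ (ρ t 1 + ρ t 2) / 2
        linarith
      · show (ρ t 1 + ρ t 2) / 2 ≤ (Q t 1 + Q t 2) / 2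
        simp [hQ]
        linarith
    have hm21 : Lcost (thetaA (Q t) 2 1) (m t 2 1) ≤ Lcost (thetaA (ρ t) 2 1) (m t 2 1) := by
      apply Lcost_anti
      · show (0:ℝ) ≤ (ρ t 2 + ρ t 1) / 2
        linarith
      · show (ρ t 2 + ρ t 1) / 2 ≤ (Q t 2 + Q t 1) / 2
        simp [hQ]
        linarith
    rw [eQ, eP]
    simp only [hH]
    rw [← mul_add]
    apply mul_le_mul_right
    calc Lcost (thetaA (Q t) 0 1) 0 + Lcost (thetaA (Q t) 1 0) 0
          + Lcost (thetaA (Q t) 1 2) (m t 1 2) + Lcost (thetaA (Q t) 2 1) (m t 2 1)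
          + (Lcost (thetaA (ρ t) 0 1) (m t 0 1) + Lcost (thetaA (ρ t) 1 0) (m t 1 0))
        = Lcost (thetaA (ρ t) 0 1) (m t 0 1) + Lcost (thetaA (ρ t) 1 0) (m t 1 0)
          + Lcost (thetaA (Q t) 1 2) (m t 1 2) + Lcost (thetaA (Q t) 2 1) (m t 2 1) := by
          rw [hz1, hz2]; ring
      _ ≤ Lcost (thetaA (ρ t) 0 1) (m t 0 1) + Lcost (thetaA (ρ t) 1 0) (m t 1 0)
          + Lcost (thetaA (ρ t) 1 2) (m t 1 2) + Lcost (thetaA (ρ t) 2 1) (m t 2 1) :=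
          add_le_add (add_le_add le_rfl hm12) hm21
  have hHne : ∫⁻ t, H t ∂μr ≠ 0 := by
    intro hzero
    have hae0 : H =ᵐ[μr] 0 := (lintegral_eq_zero_iff' hHaem).1 hzero
    have hm01 : ∀ᵐ s ∂μr, m s 0 1 = 0 := by
      filter_upwards [hae0, ae_restrict_mem measurableSet_Icc] with s hs1 hs2
      have hnn := (hPb s hs2).1
      have n0 := hnn 0
      have n1 := hnn 1
      simp only [hH, Pi.zero_apply] at hs1
      rw [mul_eq_zero] at hs1
      rcases hs1 with h | h
      · exact absurd h (by norm_num)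
      · have h1 := (add_eq_zero.1 h).1
        refine eq_zero_of_Lcost_eq_zero ?_ h1
        show (0:ℝ) ≤ (ρ s 0 + ρ s 1) / 2
        linarith
    have hall : ∀ t ∈ Set.Icc (0:ℝ) 1, ρ t 0 = 0 := by
      intro t ht
      have hm01' := (ae_restrict_iff' measurableSet_Icc).1 hm01
      have hintz : (∫ s in (0:ℝ)..t,
          (1 + wd s) * ∑ j, (if pathE3 0 j then m s 0 j else 0)) = 0 := by
        rw [intervalIntegral.integral_congr_ae (g := fun _ => (0:ℝ)) ?_,
          intervalIntegral.integral_zero]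
        filter_upwards [hm01'] with s hs hmem
        rw [Set.uIoc_of_le ht.1] at hmem
        have hsI : s ∈ Set.Icc (0:ℝ) 1 := ⟨le_of_lt hmem.1, hmem.2.trans ht.2⟩
        rw [hsum0 s, hs hsI, mul_zero]
      have he := hODE 0 t ht
      rw [hintz] at he
      simpa using he
    apply hne
    filter_upwards [ae_restrict_mem measurableSet_Icc] with t ht using hall t ht
  refine ⟨Q, M, hfeas, ?_⟩
  have hstep : action pathE3 Q M + ∫⁻ t, H t ∂μr ≤ action pathE3 ρ m := by
    have hactQ : action pathE3 Q M = ∫⁻ t,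
        ((1/4) * ∑ i, ∑ j, (if pathE3 i j then Lcost (thetaA (Q t) i j) (M t i j) else 0)) ∂μr :=
      rfl
    have hactP : action pathE3 ρ m = ∫⁻ t,
        ((1/4) * ∑ i, ∑ j, (if pathE3 i j then Lcost (thetaA (ρ t) i j) (m t i j) else 0)) ∂μr :=
      rfl
    rw [hactQ, hactP]
    refine le_trans (le_lintegral_add _ _) (lintegral_mono_ae ?_)
    filter_upwards [ae_restrict_mem measurableSet_Icc] with t ht
    exact key t ht
  have hfinQ : action pathE3 Q M ≠ ⊤ :=
    (lt_of_le_of_lt (le_trans le_self_add hstep) hfin).ne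
  calc action pathE3 Q M < action pathE3 Q M + ∫⁻ t, H t ∂μr :=
        ENNReal.lt_add_right hfinQ hHne
    _ ≤ action pathE3 ρ m := hstep

/-- Boundary behavior on the three-node path graph for the specially perturbed
problem with `ρ^a = (0,0,1)`, `ρ^b = (0,1/2,1/2)`: any feasible pair of finite
action whose first component is not a.e. zero can be strictly improved, and hence
every minimizer stays on the boundary `ρ₁ ≡ 0`. -/
theorem boundary_behavior_three_node_path
    (w wd : ℝ → ℝ) (hw : IsPWL w wd)
    (hslope : ∀ t ∈ Set.Ico (0 : ℝ) 1, wd t ≠ -1) :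
    (∀ (ρ : ℝ → Fin 3 → ℝ) (m : ℝ → Fin 3 → Fin 3 → ℝ),
      SFeasible pathE3 wd ![0, 0, 1] ![0, 1/2, 1/2] ρ m →
      action pathE3 ρ m < ⊤ →
      ¬ (∀ᵐ t ∂(volume.restrict (Set.Icc (0 : ℝ) 1)), ρ t 0 = 0) →
      ∃ (ρ' : ℝ → Fin 3 → ℝ) (m' : ℝ → Fin 3 → Fin 3 → ℝ),
        SFeasible pathE3 wd ![0, 0, 1] ![0, 1/2, 1/2] ρ' m' ∧
        action pathE3 ρ' m' < action pathE3 ρ m) ∧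
    (∀ (ρs : ℝ → Fin 3 → ℝ) (ms : ℝ → Fin 3 → Fin 3 → ℝ),
      SFeasible pathE3 wd ![0, 0, 1] ![0, 1/2, 1/2] ρs ms →
      (∀ (ρ : ℝ → Fin 3 → ℝ) (m : ℝ → Fin 3 → Fin 3 → ℝ),
        SFeasible pathE3 wd ![0, 0, 1] ![0, 1/2, 1/2] ρ m →
        action pathE3 ρs ms ≤ action pathE3 ρ m) →
      ∀ t ∈ Set.Icc (0 : ℝ) 1, ρs t 0 = 0) := by
  constructor
  · intro ρ m hF hfin hne
    exact improve wd ρ m hF hfin hne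
  · intro ρs ms hFs hmin t ht
    by_contra hne0
    have hpos : 0 < ρs t 0 := lt_of_le_of_ne ((hFs.2.1 t ht).1 0) (Ne.symm hne0)
    obtain ⟨P, M, hfeasP, hfinP⟩ := exists_finite w wd hw hslope
    have hfinS : action pathE3 ρs ms < ⊤ := lt_of_le_of_lt (hmin P M hfeasP) hfinP
    have hnotae : ¬ (∀ᵐ s ∂(volume.restrict (Set.Icc (0:ℝ) 1)), ρs s 0 = 0) := by
      intro hae
      have hcont : ContinuousWithinAt (fun s => ρs s 0) (Set.Icc 0 1) t :=
        ((continuous_apply (0 : Fin 3)).comp_continuousOn hFs.1) t ht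
      have hev : ∀ᶠ s in nhdsWithin t (Set.Icc 0 1), 0 < ρs s 0 :=
        hcont.eventually (eventually_gt_nhds hpos)
      obtain ⟨δ, hδ, hball⟩ := Metric.mem_nhdsWithin_iff.mp hev
      set lo := max 0 (t - δ/2) with hlo
      set hi := min 1 (t + δ/2) with hhi
      have ht0 := ht.1
      have ht1 := ht.2
      have hlh : lo < hi := by
        apply max_lt
        · exact lt_min one_pos (by linarith)
        · exact lt_min (by linarith) (by linarith)
      have hsub : Set.Icc lo hi ⊆ {s | ρs s 0 ≠ 0} ∩ Set.Icc 0 1 := by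
        intro s hs
        have hs1 : 0 ≤ s := le_trans (le_max_left _ _) hs.1
        have hs2 : s ≤ 1 := le_trans hs.2 (min_le_left _ _)
        have hub : s ≤ t + δ/2 := le_trans hs.2 (min_le_right _ _)
        have hlb : t - δ/2 ≤ s := le_trans (le_max_right _ _) hs.1
        have hd : s ∈ Metric.ball t δ := by
          rw [Metric.mem_ball, Real.dist_eq, abs_sub_lt_iff]
          constructor <;> linarith
        have hgt : 0 < ρs s 0 := hball ⟨hd, hs1, hs2⟩
        exact ⟨ne_of_gt hgt, hs1, hs2⟩
      have hz : volume ({s | ρs s 0 ≠ 0} ∩ Set.Icc (0:ℝ) 1) = 0 := by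
        have h' := ae_iff.mp hae
        rwa [Measure.restrict_apply' measurableSet_Icc] at h'
      have hvol : volume (Set.Icc lo hi) = 0 :=
        le_antisymm (hz ▸ measure_mono hsub) zero_le
      rw [Real.volume_Icc] at hvol
      have hle := ENNReal.ofReal_eq_zero.1 hvol
      linarith
    obtain ⟨ρ', m', hfeas', hlt⟩ := improve wd ρs ms hFs hfinS hnotae
    exact absurd (hmin ρ' m' hfeas') (not_le.2 hlt)

end
end
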